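/- For every modal proposition A, H_σ ⊢ A⁻ ↔ A. -/

import Mathlib

namespace PLHA

/-! ## Modal propositional language -/

/-- Modal propositional formulas: atomic variables, ⊥, ∧, ∨, →, □. -/
inductive Form : Type
  | var : ℕ → Form
  | bot : Form
  | and : Form → Form → Form
  | or  : Form → Form → Form
  | imp : Form → Form → Form
  | box : Form → Form
  deriving DecidableEq

namespace Form

/-- ⊤ -/
def top : Form := imp bot bot

/-- A ↔ B -/
def iffF (A B : Form) : Form := and (imp A B) (imp B A)

/-- ⊡A := A ∧ □A -/
def boxdot (A : Form) : Form := and A (box A)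

/-- `A ∈ NOI`: every occurrence of → is in the scope of some □. -/
def noi : Form → Bool
  | var _ => true
  | bot => true
  | and A B => noi A && noi B
  | or A B => noi A && noi B
  | imp _ _ => false
  | box _ => true

/-- The Leivant translation `A^l`. -/
def lev : Form → Form
  | var n => var n
  | bot => bot
  | and A B => and (lev A) (lev B)
  | or A B => or (boxdot (lev A)) (boxdot (lev B))
  | imp A B => if noi A then imp A (lev B) else imp A B
  | box A => box A

/-- atomic propositions: atomic variables and ⊥. -/
def isAtom (A : Form) : Prop := (∃ n, A = var n) ∨ A = bot

/-- boxed propositions. -/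
def isBoxed (A : Form) : Prop := ∃ B, A = box B

/-- non-modal (□-free) propositions. -/
def boxFree : Form → Bool
  | var _ => true
  | bot => true
  | and A B => boxFree A && boxFree B
  | or A B => boxFree A && boxFree B
  | imp A B => boxFree A && boxFree B
  | box _ => false

/-- A bound on the indices of the variables occurring in a formula. -/
def fvb : Form → ℕ
  | var n => n + 1
  | bot => 0
  | and A B => max (fvb A) (fvb B)
  | or A B => max (fvb A) (fvb B)
  | imp A B => max (fvb A) (fvb B)
  | box A => fvb A

/-- maximal nesting depth of boxes. -/
def bdep : Form → ℕ
  | var _ => 0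
  | bot => 0
  | and A B => max (bdep A) (bdep B)
  | or A B => max (bdep A) (bdep B)
  | imp A B => max (bdep A) (bdep B)
  | box A => bdep A + 1

/-- the complexity measure ρ used to define NNIL. -/
def rho : Form → ℕ
  | var _ => 0
  | bot => 0
  | and A B => max (rho A) (rho B)
  | or A B => max (rho A) (rho B)
  | imp A B => max (rho A + 1) (rho B)
  | box _ => 0

end Form

/-- NNIL: no nested implications to the left. -/
def NNILc (A : Form) : Prop := Form.rho A ≤ 1

/-- TNNIL: thoroughly NNIL propositions. -/
inductive TNNIL : Form → Prop
  | var (n : ℕ) : TNNIL (.var n)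
  | bot : TNNIL .bot
  | and {A B} : TNNIL A → TNNIL B → TNNIL (.and A B)
  | or {A B} : TNNIL A → TNNIL B → TNNIL (.or A B)
  | box {A} : TNNIL A → TNNIL (.box A)
  | imp {A B} : A.noi = true → TNNIL A → TNNIL B → TNNIL (.imp A B)

/-- TNNIL⁻: propositions of the form B(□C₁,…,□Cₙ) with B non-modal and Cᵢ ∈ TNNIL. -/
inductive TNNILminus : Form → Prop
  | var (n : ℕ) : TNNILminus (.var n)
  | bot : TNNILminus .bot
  | box {A} : TNNIL A → TNNILminus (.box A)
  | and {A B} : TNNILminus A → TNNILminus B → TNNILminus (.and A B)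
  | or {A B} : TNNILminus A → TNNILminus B → TNNILminus (.or A B)
  | imp {A B} : TNNILminus A → TNNILminus B → TNNILminus (.imp A B)

/-! ## Proof systems -/

/-- Hilbert-style axioms of intuitionistic propositional logic (over the modal language). -/
inductive IpcAx : Form → Prop
  | a1 (A B) : IpcAx (.imp A (.imp B A))
  | a2 (A B C) : IpcAx (.imp (.imp A (.imp B C)) (.imp (.imp A B) (.imp A C)))
  | a3 (A B) : IpcAx (.imp A (.imp B (.and A B)))
  | a4 (A B) : IpcAx (.imp (.and A B) A)
  | a5 (A B) : IpcAx (.imp (.and A B) B)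
  | a6 (A B) : IpcAx (.imp A (.or A B))
  | a7 (A B) : IpcAx (.imp B (.or A B))
  | a8 (A B C) : IpcAx (.imp (.imp A C) (.imp (.imp B C) (.imp (.or A B) C)))
  | a9 (A) : IpcAx (.imp .bot A)

/-- Derivability from IPC axioms together with extra axioms `Ax`, modus ponens,
and (if `useNec = true`) the necessitation rule. -/
inductive Proves (Ax : Form → Prop) (useNec : Bool) : Form → Prop
  | ax {A} : Ax A → Proves Ax useNec A
  | ipc {A} : IpcAx A → Proves Ax useNec A
  | mp {A B} : Proves Ax useNec (.imp A B) → Proves Ax useNec A → Proves Ax useNec B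
  | nec {A} : useNec = true → Proves Ax useNec A → Proves Ax useNec (.box A)

/-- K and 4 axiom schemas. -/
inductive K4Ax : Form → Prop
  | k (A B) : K4Ax (.imp (.box (.imp A B)) (.imp (.box A) (.box B)))
  | four (A) : K4Ax (.imp (.box A) (.box (.box A)))

/-- K, 4, and Löb's axiom schemas. -/
inductive GLAx : Form → Prop
  | k (A B) : GLAx (.imp (.box (.imp A B)) (.imp (.box A) (.box B)))
  | four (A) : GLAx (.imp (.box A) (.box (.box A)))
  | lob (A) : GLAx (.imp (.box (.imp (.box A) A)) (.box A))

/-- IPC_□ : intuitionistic propositional logic over the modal language. -/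
def IPCbProves : Form → Prop := Proves (fun _ => False) false

/-- iK4. -/
def iK4Proves : Form → Prop := Proves K4Ax true

/-- iGL. -/
def iGLProves : Form → Prop := Proves GLAx true

/-- the completeness principle CP : A → □A. -/
def CPAx : Form → Prop := fun F => ∃ A : Form, F = .imp A (.box A)

/-- LC := iGL + CP. -/
def LCProves : Form → Prop := Proves (fun F => GLAx F ∨ CPAx F) true

/-- CP restricted to atomic propositions. -/
def CPaAx : Form → Prop := fun F => ∃ A : Form, A.isAtom ∧ F = .imp A (.box A)

/-- the extended Leivant principle Le⁺ : □A → □A^l. -/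
def LeplusAx : Form → Prop := fun F => ∃ A : Form, F = .imp (.box A) (.box A.lev)

/-- LLe⁺ := iGL + Le⁺ + CP_a. -/
def LLeplusProves : Form → Prop := Proves (fun F => GLAx F ∨ LeplusAx F ∨ CPaAx F) true

/-! ## The preservativity relation ▶ -/

/-- the bracket operation [A]B. -/
def bracket (A : Form) : Form → Form
  | .and B C => .and (bracket A B) (bracket A C)
  | .or B C => .or (bracket A B) (bracket A C)
  | .imp B C => .imp A (.imp B C)
  | B => B

def listConj : List Form → Form
  | [] => Form.top
  | [A] => A
  | A :: l => .and A (listConj l)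

def listDisj : List Form → Form
  | [] => Form.bot
  | [A] => A
  | A :: l => .or A (listDisj l)

/-- the relation ▶ : the smallest relation satisfying A1–A4 and B1–B3.
In B2 a (finite) set of implications is represented by a list `X` of pairs `(E, F)`
standing for the implications `E → F`. -/
inductive Pres : Form → Form → Prop
  | a1 {A B} : iK4Proves (.imp A B) → Pres A B
  | a2 {A B C} : Pres A B → Pres B C → Pres A C
  | a3 {A B C} : Pres C A → Pres C B → Pres C (.and A B)
  | a4 {A B} : Pres A B → Pres (.box A) (.box B)
  | b1 {A B C} : Pres A C → Pres B C → Pres (.or A B) C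
  | b2 (X : List (Form × Form)) (C : Form) :
      Pres (.imp (listConj (X.map fun p => Form.imp p.1 p.2)) C)
        (listDisj ((X.map Prod.fst ++ [C]).map
          (bracket (listConj (X.map fun p => Form.imp p.1 p.2)))))
  | b3 {A B C} : Pres A B → (C.isAtom ∨ C.isBoxed) → Pres (.imp C A) (.imp C B)

/-- the axioms of H_σ : LLe⁺ + CP_a + {□A→□B : A ▶ B}. -/
def HsigmaAx : Form → Prop := fun F =>
  GLAx F ∨ LeplusAx F ∨ CPaAx F ∨ ∃ A B : Form, Pres A B ∧ F = .imp (.box A) (.box B)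

/-- H_σ. -/
def HsigmaProves : Form → Prop := Proves HsigmaAx true

/-! ## NNIL/TNNIL approximations -/

/-- `star` is (a realization of) Visser's NNIL-algorithm: `star A` is the best NNIL
approximation of `A` from below. -/
def IsNNILApproxOp (star : Form → Form) : Prop :=
  ∀ A : Form, NNILc (star A) ∧ IPCbProves (.imp (star A) A) ∧
    ∀ B : Form, NNILc B → IPCbProves (.imp B A) → IPCbProves (.imp B (star A))

/-- replace the outermost boxed subformulas of a formula by the fresh variables
`k, k+1, …` (left to right), returning the resulting non-modal skeleton together
with the list of bodies of removed boxes. -/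
def strip : Form → ℕ → Form × List Form
  | .var n, _ => (.var n, [])
  | .bot, _ => (.bot, [])
  | .and A B, k =>
      let pa := strip A k
      let pb := strip B (k + pa.2.length)
      (.and pa.1 pb.1, pa.2 ++ pb.2)
  | .or A B, k =>
      let pa := strip A k
      let pb := strip B (k + pa.2.length)
      (.or pa.1 pb.1, pa.2 ++ pb.2)
  | .imp A B, k =>
      let pa := strip A k
      let pb := strip B (k + pa.2.length)
      (.imp pa.1 pb.1, pa.2 ++ pb.2)
  | .box A, k => (.var k, [A])

/-- simultaneous substitution of formulas for variables. -/
def substF (f : ℕ → Form) : Form → Form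
  | .var n => f n
  | .bot => .bot
  | .and A B => .and (substF f A) (substF f B)
  | .or A B => .or (substF f A) (substF f B)
  | .imp A B => .imp (substF f A) (substF f B)
  | .box A => .box (substF f A)

/-- fuelled version of the TNNIL approximation `A⁺`:
`A⁺ := (A')^*[pᵢ | □Bᵢ⁺]` where `A = A'[pᵢ | □Bᵢ]` with `A'` non-modal. -/
def plusAux (star : Form → Form) : ℕ → Form → Form
  | 0, A => A
  | fuel + 1, A =>
      let k := A.fvb
      let p := strip A k
      substF (fun n =>
        if k ≤ n ∧ n < k + p.2.length then
          .box (plusAux star fuel (p.2.getD (n - k) .bot))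
        else .var n) (star p.1)

/-- the TNNIL approximation `A⁺` (relative to a realization `star` of the NNIL-algorithm). -/
def plusF (star : Form → Form) (A : Form) : Form := plusAux star (A.bdep + 1) A

/-- `A⁻`: writing `A = B(□C₁,…,□Cₙ)` with `B` non-modal, `A⁻ := B(□C₁⁺,…,□Cₙ⁺)`. -/
def minusF (star : Form → Form) (A : Form) : Form :=
  let k := A.fvb
  let p := strip A k
  substF (fun n =>
    if k ≤ n ∧ n < k + p.2.length then
      .box (plusF star (p.2.getD (n - k) .bot))
    else .var n) p.1

/-- the box translation A^□. -/
def boxTr : Form → Form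
  | .var n => Form.boxdot (.var n)
  | .bot => Form.boxdot .bot
  | .and A B => .and (boxTr A) (boxTr B)
  | .or A B => .or (boxTr A) (boxTr B)
  | .imp A B => Form.boxdot (.imp (boxTr A) (boxTr B))
  | .box A => .box (boxTr A)

/-- a Gödel numbering of modal formulas. -/
def encodeForm : Form → ℕ
  | .var n => Nat.pair 0 n
  | .bot => Nat.pair 1 0
  | .and A B => Nat.pair 2 (Nat.pair (encodeForm A) (encodeForm B))
  | .or A B => Nat.pair 3 (Nat.pair (encodeForm A) (encodeForm B))
  | .imp A B => Nat.pair 4 (Nat.pair (encodeForm A) (encodeForm B))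
  | .box A => Nat.pair 5 (encodeForm A)

/-! ## Propositional Kripke models -/

/-- Kripke models for intuitionistic modal logic. -/
structure PKripke where
  W : Type
  le : W → W → Prop
  r : W → W → Prop
  V : W → ℕ → Prop
  le_refl : ∀ w, le w w
  le_trans : ∀ {a b c}, le a b → le b c → le a c
  le_antisymm : ∀ {a b}, le a b → le b a → a = b
  le_r : ∀ {a b c}, le a b → r b c → r a c
  mono : ∀ {a b : W} {n : ℕ}, le a b → V a n → V b n

/-- the forcing relation of a propositional modal Kripke model. -/
def pforces (M : PKripke) : Form → M.W → Prop
  | .var n, w => M.V w n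
  | .bot, _ => False
  | .and A B, w => pforces M A w ∧ pforces M B w
  | .or A B, w => pforces M A w ∨ pforces M B w
  | .imp A B, w => ∀ v, M.le w v → pforces M A v → pforces M B v
  | .box A, w => ∀ v, M.r w v → pforces M A v

namespace PKripke

/-- brilliant: (R;≤) ⊆ R. -/
def Brilliant (M : PKripke) : Prop := ∀ {a b c : M.W}, M.r a b → M.le b c → M.r a c

/-- reverse well-founded: well-founded with respect to R⁻¹. -/
def RevWF (M : PKripke) : Prop := WellFounded (fun a b : M.W => M.r b a)

/-- perfect: brilliant, reverse well-founded, and R ⊆ <. -/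
def Perfect (M : PKripke) : Prop :=
  M.Brilliant ∧ M.RevWF ∧ ∀ {a b : M.W}, M.r a b → M.le a b ∧ a ≠ b

/-- the partial order (W,≤) is a tree: it has a root and the set of predecessors
of every node is linearly ordered. -/
def TreeFrame (M : PKripke) : Prop :=
  (∃ root : M.W, ∀ w, M.le root w) ∧
  ∀ w u v : M.W, M.le u w → M.le v w → (M.le u v ∨ M.le v u)

end PKripke

/-! ## First-order arithmetic -/

/-- terms of the language (S, +, ·, <, 0) (de Bruijn variables). -/
inductive ATerm : Type
  | var : ℕ → ATerm
  | zero : ATerm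
  | succ : ATerm → ATerm
  | add : ATerm → ATerm → ATerm
  | mul : ATerm → ATerm → ATerm
  deriving DecidableEq

namespace ATerm

def lift : ATerm → ℕ → ATerm
  | var n, d => if n < d then var n else var (n + 1)
  | zero, _ => zero
  | succ t, d => succ (t.lift d)
  | add t u, d => add (t.lift d) (u.lift d)
  | mul t u, d => mul (t.lift d) (u.lift d)

def subst : ATerm → ℕ → ATerm → ATerm
  | var n, k, s => if n < k then var n else if n = k then s else var (n - 1)
  | zero, _, _ => zero
  | succ t, k, s => succ (t.subst k s)
  | add t u, k, s => add (t.subst k s) (u.subst k s)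
  | mul t u, k, s => mul (t.subst k s) (u.subst k s)

/-- non-binding substitution: replace `var k` by `s`, leaving other variables alone. -/
def substId : ATerm → ℕ → ATerm → ATerm
  | var n, k, s => if n = k then s else var n
  | zero, _, _ => zero
  | succ t, k, s => succ (t.substId k s)
  | add t u, k, s => add (t.substId k s) (u.substId k s)
  | mul t u, k, s => mul (t.substId k s) (u.substId k s)

/-- all variables have index < k. -/
def vlt : ATerm → ℕ → Prop
  | var n, k => n < k
  | zero, _ => True
  | succ t, k => t.vlt k
  | add t u, k => t.vlt k ∧ u.vlt k
  | mul t u, k => t.vlt k ∧ u.vlt k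

/-- evaluation in the standard model ℕ. -/
def evalN : ATerm → (ℕ → ℕ) → ℕ
  | var n, ρ => ρ n
  | zero, _ => 0
  | succ t, ρ => t.evalN ρ + 1
  | add t u, ρ => t.evalN ρ + u.evalN ρ
  | mul t u, ρ => t.evalN ρ * u.evalN ρ

def fvB : ATerm → ℕ
  | var n => n + 1
  | zero => 0
  | succ t => t.fvB
  | add t u => max t.fvB u.fvB
  | mul t u => max t.fvB u.fvB

/-- a Gödel numbering of terms. -/
def code : ATerm → ℕ
  | var n => Nat.pair 0 n
  | zero => Nat.pair 1 0
  | succ t => Nat.pair 2 t.code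
  | add t u => Nat.pair 3 (Nat.pair t.code u.code)
  | mul t u => Nat.pair 4 (Nat.pair t.code u.code)

end ATerm

/-- the numeral of a natural number. -/
def numeral : ℕ → ATerm
  | 0 => .zero
  | n + 1 => .succ (numeral n)

/-- extend an environment by one value at index 0. -/
def econs {α : Sort*} (b : α) (ρ : ℕ → α) : ℕ → α
  | 0 => b
  | n + 1 => ρ n

/-- first-order formulas of arithmetic (de Bruijn variables). -/
inductive AForm : Type
  | eq : ATerm → ATerm → AForm
  | lt : ATerm → ATerm → AForm
  | fal : AForm
  | and : AForm → AForm → AForm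
  | or : AForm → AForm → AForm
  | imp : AForm → AForm → AForm
  | all : AForm → AForm
  | ex : AForm → AForm
  deriving DecidableEq

namespace AForm

def neg (A : AForm) : AForm := imp A fal

def iffA (A B : AForm) : AForm := and (imp A B) (imp B A)

def lift : AForm → ℕ → AForm
  | eq t u, d => eq (t.lift d) (u.lift d)
  | lt t u, d => lt (t.lift d) (u.lift d)
  | fal, _ => fal
  | and A B, d => and (A.lift d) (B.lift d)
  | or A B, d => or (A.lift d) (B.lift d)
  | imp A B, d => imp (A.lift d) (B.lift d)
  | all A, d => all (A.lift (d + 1))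
  | ex A, d => ex (A.lift (d + 1))

/-- capture-avoiding substitution of a term for variable `k` (instantiating a binder). -/
def subst : AForm → ℕ → ATerm → AForm
  | eq t u, k, s => eq (t.subst k s) (u.subst k s)
  | lt t u, k, s => lt (t.subst k s) (u.subst k s)
  | fal, _, _ => fal
  | and A B, k, s => and (A.subst k s) (B.subst k s)
  | or A B, k, s => or (A.subst k s) (B.subst k s)
  | imp A B, k, s => imp (A.subst k s) (B.subst k s)
  | all A, k, s => all (A.subst (k + 1) (s.lift 0))
  | ex A, k, s => ex (A.subst (k + 1) (s.lift 0))

/-- non-binding substitution: replace the free variable `k` by `s`. -/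
def substId : AForm → ℕ → ATerm → AForm
  | eq t u, k, s => eq (t.substId k s) (u.substId k s)
  | lt t u, k, s => lt (t.substId k s) (u.substId k s)
  | fal, _, _ => fal
  | and A B, k, s => and (A.substId k s) (B.substId k s)
  | or A B, k, s => or (A.substId k s) (B.substId k s)
  | imp A B, k, s => imp (A.substId k s) (B.substId k s)
  | all A, k, s => all (A.substId (k + 1) (s.lift 0))
  | ex A, k, s => ex (A.substId (k + 1) (s.lift 0))

/-- all free variables have index < k. -/
def vlt : AForm → ℕ → Prop
  | eq t u, k => t.vlt k ∧ u.vlt k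
  | lt t u, k => t.vlt k ∧ u.vlt k
  | fal, _ => True
  | and A B, k => A.vlt k ∧ B.vlt k
  | or A B, k => A.vlt k ∧ B.vlt k
  | imp A B, k => A.vlt k ∧ B.vlt k
  | all A, k => A.vlt (k + 1)
  | ex A, k => A.vlt (k + 1)

/-- a bound on the free variables of a formula. -/
def fvB : AForm → ℕ
  | eq t u => max t.fvB u.fvB
  | lt t u => max t.fvB u.fvB
  | fal => 0
  | and A B => max A.fvB B.fvB
  | or A B => max A.fvB B.fvB
  | imp A B => max A.fvB B.fvB
  | all A => A.fvB - 1
  | ex A => A.fvB - 1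

/-- classical (Tarskian) satisfaction in the standard model ℕ. -/
def SatN : AForm → (ℕ → ℕ) → Prop
  | eq t u, ρ => t.evalN ρ = u.evalN ρ
  | lt t u, ρ => t.evalN ρ < u.evalN ρ
  | fal, _ => False
  | and A B, ρ => A.SatN ρ ∧ B.SatN ρ
  | or A B, ρ => A.SatN ρ ∨ B.SatN ρ
  | imp A B, ρ => A.SatN ρ → B.SatN ρ
  | all A, ρ => ∀ n : ℕ, A.SatN (econs n ρ)
  | ex A, ρ => ∃ n : ℕ, A.SatN (econs n ρ)

/-- a Gödel numbering of arithmetic formulas. -/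
def code : AForm → ℕ
  | eq t u => Nat.pair 0 (Nat.pair t.code u.code)
  | lt t u => Nat.pair 1 (Nat.pair t.code u.code)
  | fal => Nat.pair 2 0
  | and A B => Nat.pair 3 (Nat.pair A.code B.code)
  | or A B => Nat.pair 4 (Nat.pair A.code B.code)
  | imp A B => Nat.pair 5 (Nat.pair A.code B.code)
  | all A => Nat.pair 6 A.code
  | ex A => Nat.pair 7 A.code

end AForm

/-- Δ₀ formulas: only bounded quantifiers. -/
inductive Delta0 : AForm → Prop
  | eq (t u) : Delta0 (.eq t u)
  | lt (t u) : Delta0 (.lt t u)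
  | fal : Delta0 .fal
  | and {A B} : Delta0 A → Delta0 B → Delta0 (.and A B)
  | or {A B} : Delta0 A → Delta0 B → Delta0 (.or A B)
  | imp {A B} : Delta0 A → Delta0 B → Delta0 (.imp A B)
  | ball (t : ATerm) {A} : Delta0 A → Delta0 (.all (.imp (.lt (.var 0) (t.lift 0)) A))
  | bex (t : ATerm) {A} : Delta0 A → Delta0 (.ex (.and (.lt (.var 0) (t.lift 0)) A))

/-- Σ₁ formulas: existential quantifiers over a Δ₀ matrix. -/
inductive Sigma1 : AForm → Prop
  | of_delta0 {A} : Delta0 A → Sigma1 A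
  | ex {A} : Sigma1 A → Sigma1 (.ex A)

/-- a Hilbert-style proof system for intuitionistic first-order logic with equality,
from a set `T` of (closed) non-logical axioms. -/
inductive Prf (T : AForm → Prop) : AForm → Prop
  | hyp {A} : T A → Prf T A
  | mp {A B} : Prf T (.imp A B) → Prf T A → Prf T B
  | gen {A} : Prf T A → Prf T (.all A)
  | k (A B) : Prf T (.imp A (.imp B A))
  | s (A B C) : Prf T (.imp (.imp A (.imp B C)) (.imp (.imp A B) (.imp A C)))
  | pair (A B) : Prf T (.imp A (.imp B (.and A B)))
  | fst (A B) : Prf T (.imp (.and A B) A)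
  | snd (A B) : Prf T (.imp (.and A B) B)
  | inl (A B) : Prf T (.imp A (.or A B))
  | inr (A B) : Prf T (.imp B (.or A B))
  | cases (A B C) : Prf T (.imp (.imp A C) (.imp (.imp B C) (.imp (.or A B) C)))
  | exfalso (A) : Prf T (.imp .fal A)
  | allE (A : AForm) (t : ATerm) : Prf T (.imp (.all A) (A.subst 0 t))
  | allShift (A B : AForm) : Prf T (.imp (.all (.imp (B.lift 0) A)) (.imp B (.all A)))
  | exI (A : AForm) (t : ATerm) : Prf T (.imp (A.subst 0 t) (.ex A))
  | exE (A B : AForm) : Prf T (.imp (.all (.imp A (B.lift 0))) (.imp (.ex A) B))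
  | eqRefl : Prf T (.all (.eq (.var 0) (.var 0)))
  | leibniz (A : AForm) : Prf T (.all (.all (.imp (.eq (.var 1) (.var 0))
      (.imp (((A.lift 1).lift 1).substId 0 (.var 1))
            (((A.lift 1).lift 1).substId 0 (.var 0))))))

/-- iterated universal quantification. -/
def ucAux : ℕ → AForm → AForm
  | 0, A => A
  | k + 1, A => ucAux k (.all A)

/-- universal closure. -/
def uc (A : AForm) : AForm := ucAux A.fvB A

/-- the induction axiom for the formula A (induction on variable 0). -/
def indAx (A : AForm) : AForm :=
  uc (.imp (.and (A.subst 0 .zero) (.all (.imp A (A.substId 0 (.succ (.var 0))))))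
      (.all A))

/-- the axioms Q1–Q8. -/
inductive QAx : AForm → Prop
  | q1 : QAx (.all (.imp (.eq (.succ (.var 0)) .zero) .fal))
  | q2 : QAx (.all (.all (.imp (.eq (.succ (.var 1)) (.succ (.var 0))) (.eq (.var 1) (.var 0)))))
  | q3 : QAx (.all (.or (.eq (.var 0) .zero) (.ex (.eq (.succ (.var 0)) (.var 1)))))
  | q4 : QAx (.all (.eq (.add (.var 0) .zero) (.var 0)))
  | q5 : QAx (.all (.all (.eq (.add (.var 1) (.succ (.var 0))) (.succ (.add (.var 1) (.var 0))))))
  | q6 : QAx (.all (.eq (.mul (.var 0) .zero) .zero))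
  | q7 : QAx (.all (.all (.eq (.mul (.var 1) (.succ (.var 0))) (.add (.mul (.var 1) (.var 0)) (.var 1)))))
  | q8 : QAx (.all (.all (AForm.iffA (.lt (.var 1) (.var 0))
      (.ex (.eq (.add (.var 2) (.succ (.var 0))) (.var 1))))))

/-- the axioms of Heyting Arithmetic: Q1–Q8 and full induction. -/
def HAAx : AForm → Prop := fun A => QAx A ∨ ∃ B : AForm, A = indAx B

/-- provability in HA. -/
def HAProves : AForm → Prop := Prf HAAx

/-- interface for the standard arithmetized provability predicate `Prov_HA` of HA:
`Pr A` is the Σ₁ sentence `Prov_HA(⌜A⌝)`. -/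
structure ProvPred where
  Pr : AForm → AForm
  sentence : ∀ A, (Pr A).vlt 0
  sigma1 : ∀ A, Sigma1 (Pr A)
  correct : ∀ A : AForm, ((Pr A).SatN (fun _ => 0) ↔ HAProves A)
  dNec : ∀ A, HAProves A → HAProves (Pr A)
  dK : ∀ A B, HAProves (.imp (Pr (.imp A B)) (.imp (Pr A) (Pr B)))
  dSigma : ∀ A, Sigma1 A → A.vlt 0 → HAProves (.imp A (Pr A))
  dLob : ∀ A, HAProves (.imp (Pr (.imp (Pr A) A)) (Pr A))

/-- the arithmetical interpretation `σ_HA` of modal formulas determined by a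
substitution `σ` and a provability predicate `Pr`. -/
def interp (Pr : AForm → AForm) (σ : ℕ → AForm) : Form → AForm
  | .var n => σ n
  | .bot => .fal
  | .and A B => .and (interp Pr σ A) (interp Pr σ B)
  | .or A B => .or (interp Pr σ A) (interp Pr σ B)
  | .imp A B => .imp (interp Pr σ A) (interp Pr σ B)
  | .box A => Pr (interp Pr σ A)

/-- σ is an arithmetical substitution: it maps atomic variables to sentences. -/
def ArithSubst (σ : ℕ → AForm) : Prop := ∀ n, (σ n).vlt 0

/-- σ is a Σ₁-substitution: it maps atomic variables to Σ₁ sentences. -/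
def Sigma1Subst (σ : ℕ → AForm) : Prop := ∀ n, Sigma1 (σ n) ∧ (σ n).vlt 0

/-! ## The theories HAₓ and indexed provability (for the refined Leivant principle) -/

/-- induction formulas of the special shape (A→B)→B with A, B ∈ Σ₁. -/
def shapeInd (A : AForm) : Prop := ∃ S Tf : AForm, Sigma1 S ∧ Sigma1 Tf ∧ A = .imp (.imp S Tf) Tf

/-- the axioms of HAₓ: Q1-Q8, and induction restricted to formulas of the shape
(A→B)→B with A,B ∈ Σ₁ or with Gödel number ≤ x. -/
def HAxAx (x : ℕ) : AForm → Prop := fun A =>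
  QAx A ∨ ∃ B : AForm, (shapeInd B ∨ B.code ≤ x) ∧ A = indAx B

/-- interface for the arithmetized bounded provability predicates `□ₓ`:
`PrB A` is the Σ₁ formula with free variable 0 expressing `Prov_{HA_{v₀}}(⌜A⌝)`, and
`PrBSub A` (for `A` with one free variable) is the Σ₁ formula with free variables 0, 1
expressing `Prov_{HA_{v₀}}(⌜A(v̇₁)⌝)`. -/
structure BddProvPred where
  PrB : AForm → AForm
  PrBSub : AForm → AForm
  PrB_vlt : ∀ A, (PrB A).vlt 1
  PrB_sigma1 : ∀ A, Sigma1 (PrB A)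
  PrB_correct : ∀ (A : AForm) (n : ℕ),
    ((PrB A).SatN (fun i => if i = 0 then n else 0) ↔ Prf (HAxAx n) A)
  PrBSub_vlt : ∀ A, (PrBSub A).vlt 2
  PrBSub_sigma1 : ∀ A, Sigma1 (PrBSub A)
  PrBSub_correct : ∀ (A : AForm) (n m : ℕ),
    ((PrBSub A).SatN (fun i => if i = 0 then n else m) ↔ Prf (HAxAx n) (A.subst 0 (numeral m)))

/-! ## First-order Kripke models of HA -/

/-- a first-order Kripke model for the language of arithmetic over the frame `(W, le)`:
each node carries a classical structure, and the structure at a smaller node is a weak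
substructure of the structure at a bigger one (realized as subsets of a common universe,
closed under the operations). -/
structure FOKripke (W : Type) (le : W → W → Prop) where
  U : Type
  dom : W → Set U
  zero : U
  succ : U → U
  add : U → U → U
  mul : U → U → U
  ltR : U → U → Prop
  dom_mono : ∀ {a b : W}, le a b → dom a ⊆ dom b
  zero_mem : ∀ a, zero ∈ dom a
  succ_mem : ∀ a x, x ∈ dom a → succ x ∈ dom a
  add_mem : ∀ a x y, x ∈ dom a → y ∈ dom a → add x y ∈ dom a
  mul_mem : ∀ a x y, x ∈ dom a → y ∈ dom a → mul x y ∈ dom a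

/-- evaluation of a term in a first-order Kripke model. -/
def tevalK {W : Type} {le : W → W → Prop} (M : FOKripke W le) (ρ : ℕ → M.U) : ATerm → M.U
  | .var n => ρ n
  | .zero => M.zero
  | .succ t => M.succ (tevalK M ρ t)
  | .add t u => M.add (tevalK M ρ t) (tevalK M ρ u)
  | .mul t u => M.mul (tevalK M ρ t) (tevalK M ρ u)

/-- the forcing relation of a first-order Kripke model. -/
def FOForces {W : Type} {le : W → W → Prop} (M : FOKripke W le) :
    AForm → W → (ℕ → M.U) → Prop
  | .eq t u, _, ρ => tevalK M ρ t = tevalK M ρ u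
  | .lt t u, _, ρ => M.ltR (tevalK M ρ t) (tevalK M ρ u)
  | .fal, _, _ => False
  | .and A B, w, ρ => FOForces M A w ρ ∧ FOForces M B w ρ
  | .or A B, w, ρ => FOForces M A w ρ ∨ FOForces M B w ρ
  | .imp A B, w, ρ => ∀ v, le w v → FOForces M A v ρ → FOForces M B v ρ
  | .all A, w, ρ => ∀ v, le w v → ∀ b ∈ M.dom v, FOForces M A v (econs b ρ)
  | .ex A, w, ρ => ∃ b ∈ M.dom w, FOForces M A w (econs b ρ)

/-- the Kripke model forces all axioms of HA. -/
def ForcesHA {W : Type} {le : W → W → Prop} (M : FOKripke W le) : Prop :=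
  ∀ A : AForm, HAAx A → ∀ w : W, FOForces M A w (fun _ => M.zero)

end PLHA

set_option linter.unusedVariables false

namespace PLHA
open Form

/-! ### Natural deduction layer for IPC -/

inductive ND : List Form → Form → Prop
  | hyp {Γ A} : A ∈ Γ → ND Γ A
  | ax {Γ A} : IpcAx A → ND Γ A
  | mp {Γ A B} : ND Γ (.imp A B) → ND Γ A → ND Γ B

namespace ND

theorem subs {Γ Δ : List Form} {C : Form} (h : ND Γ C) (hs : ∀ G ∈ Γ, ND Δ G) : ND Δ C := by
  induction h with
  | hyp h => exact hs _ h
  | ax h => exact .ax h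
  | mp h1 h2 ih1 ih2 => exact .mp ih1 ih2

theorem weak {Γ Γ' A} (h : ND Γ A) (hs : ∀ x ∈ Γ, x ∈ Γ') : ND Γ' A :=
  h.subs (fun G hG => .hyp (hs _ hG))

theorem wk {Γ A B} (h : ND Γ A) : ND (B :: Γ) A := h.weak (fun x hx => .tail _ hx)

theorem idd {Γ A} : ND Γ (.imp A A) :=
  ((ND.ax (.a2 A (.imp A A) A)).mp (.ax (.a1 A (.imp A A)))).mp (.ax (.a1 A A))

theorem ded_aux : ∀ {Δ B}, ND Δ B → ∀ {A Γ}, Δ = A :: Γ → ND Γ (.imp A B) := by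
  intro Δ B h
  induction h with
  | hyp h =>
    intro A Γ hΔ; subst hΔ
    rcases List.mem_cons.mp h with rfl | h
    · exact idd
    · exact (ND.ax (.a1 _ A)).mp (.hyp h)
  | ax h => intro A Γ _; exact (ND.ax (.a1 _ A)).mp (.ax h)
  | mp h1 h2 ih1 ih2 =>
    intro A Γ hΔ
    exact ((ND.ax (.a2 A _ _)).mp (ih1 hΔ)).mp (ih2 hΔ)

theorem ded {Γ A B} (h : ND (A :: Γ) B) : ND Γ (.imp A B) := ded_aux h rfl

theorem h0 {Γ A} : ND (A :: Γ) A := .hyp (.head _)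
theorem h1 {Γ A B} : ND (A :: B :: Γ) B := .hyp (.tail _ (.head _))
theorem h2 {Γ A B C} : ND (A :: B :: C :: Γ) C := .hyp (.tail _ (.tail _ (.head _)))
theorem h3 {Γ A B C D} : ND (A :: B :: C :: D :: Γ) D :=
  .hyp (.tail _ (.tail _ (.tail _ (.head _))))

theorem andI {Γ A B} (hA : ND Γ A) (hB : ND Γ B) : ND Γ (.and A B) :=
  ((ND.ax (.a3 A B)).mp hA).mp hB
theorem andL {Γ A B} (h : ND Γ (.and A B)) : ND Γ A := (ND.ax (.a4 A B)).mp h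
theorem andR {Γ A B} (h : ND Γ (.and A B)) : ND Γ B := (ND.ax (.a5 A B)).mp h
theorem orIL {Γ A B} (h : ND Γ A) : ND Γ (.or A B) := (ND.ax (.a6 A B)).mp h
theorem orIR {Γ A B} (h : ND Γ B) : ND Γ (.or A B) := (ND.ax (.a7 A B)).mp h
theorem orE {Γ A B C} (h : ND Γ (.or A B)) (hA : ND (A :: Γ) C) (hB : ND (B :: Γ) C) :
    ND Γ C := (((ND.ax (.a8 A B C)).mp hA.ded).mp hB.ded).mp h
theorem efq {Γ A} (h : ND Γ .bot) : ND Γ A := (ND.ax (.a9 A)).mp h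
theorem cut {Γ A B} (hA : ND Γ A) (h : ND (A :: Γ) B) : ND Γ B := h.ded.mp hA
theorem topI {Γ} : ND Γ .top := idd

end ND

theorem proves_mono {Ax Ax' : Form → Prop} {b b' : Bool} {A : Form}
    (hA : ∀ {F}, Ax F → Proves Ax' b' F) (hb : b = true → b' = true)
    (h : Proves Ax b A) : Proves Ax' b' A := by
  induction h with
  | ax h => exact hA h
  | ipc h => exact .ipc h
  | mp h1 h2 ih1 ih2 => exact .mp ih1 ih2
  | nec hb' h ih => exact .nec (hb hb') ih

theorem nd_of_ipcb {A} (h : IPCbProves A) : ND [] A := by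
  induction h with
  | ax h => exact h.elim
  | ipc h => exact .ax h
  | mp h1 h2 ih1 ih2 => exact .mp ih1 ih2
  | nec hb => exact (Bool.false_ne_true hb).elim

theorem ND.toIpcb_aux : ∀ {Δ A}, ND Δ A → Δ = [] → IPCbProves A := by
  intro Δ A h
  induction h with
  | hyp h => intro hΔ; subst hΔ; exact absurd h List.not_mem_nil
  | ax h => intro _; exact .ipc h
  | mp h1 h2 ih1 ih2 => intro hΔ; exact .mp (ih1 hΔ) (ih2 hΔ)

theorem ND.toIpcb {A} (h : ND [] A) : IPCbProves A := toIpcb_aux h rfl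

/-! ### listConj / listDisj -/

theorem nd_listConj_intro {Δ : List Form} : ∀ {l : List Form}, (∀ G ∈ l, ND Δ G) →
    ND Δ (listConj l)
  | [], _ => ND.topI
  | [A], h => h A (.head _)
  | A :: B :: l, h => by
    show ND Δ (.and A (listConj (B :: l)))
    exact ND.andI (h A (.head _)) (nd_listConj_intro (fun G hG => h G (.tail _ hG)))

theorem nd_listConj_elim {Δ : List Form} : ∀ {l : List Form}, ND Δ (listConj l) →
    ∀ {G}, G ∈ l → ND Δ G
  | [], _, _, hG => absurd hG List.not_mem_nil
  | [A], h, G, hG => by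
    rcases List.mem_singleton.mp hG with rfl; exact h
  | A :: B :: l, h, G, hG => by
    have h' : ND Δ (.and A (listConj (B :: l))) := h
    rcases List.mem_cons.mp hG with rfl | hG
    · exact h'.andL
    · exact nd_listConj_elim h'.andR hG

theorem nd_listDisj_of_mem {Δ : List Form} : ∀ {l : List Form} {G}, G ∈ l → ND Δ G →
    ND Δ (listDisj l)
  | [], _, hG, _ => absurd hG List.not_mem_nil
  | [A], G, hG, h => by
    rcases List.mem_singleton.mp hG with rfl; exact h
  | A :: B :: l, G, hG, h => by
    show ND Δ (.or A (listDisj (B :: l)))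
    rcases List.mem_cons.mp hG with rfl | hG
    · exact h.orIL
    · exact (nd_listDisj_of_mem hG h).orIR

theorem nd_listDisj_elim {Δ : List Form} {C : Form} : ∀ {l : List Form},
    ND Δ (listDisj l) → (∀ G ∈ l, ND (G :: Δ) C) → ND Δ C
  | [], h, _ => h.efq
  | [A], h, hall => h.cut (hall A (.head _))
  | A :: B :: l, h, hall => by
    have h' : ND Δ (.or A (listDisj (B :: l))) := h
    refine h'.orE (hall A (.head _)) ?_
    exact nd_listDisj_elim ND.h0 (fun G hG => (hall G (.tail _ hG)).weak
      (fun x hx => by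
        rcases List.mem_cons.mp hx with rfl | hx
        · exact .head _
        · exact .tail _ (.tail _ hx)))

theorem nd_distrib {Δ : List Form} {A : Form} : ∀ {l : List Form},
    ND Δ (.and A (listDisj l)) → ND Δ (listDisj (l.map (Form.and A ·)))
  | [], h => h.andR.efq
  | [B], h => h
  | B :: B' :: l, h => by
    show ND Δ (.or (.and A B) (listDisj ((B' :: l).map (Form.and A ·))))
    refine h.andR.orE ?_ ?_
    · exact (ND.andI h.andL.wk ND.h0).orIL
    · exact (nd_distrib (ND.andI h.andL.wk ND.h0)).orIR

/-! ### SF : sequents as formulas -/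

def SF (Γ : List Form) (C : Form) : Form := .imp (listConj Γ) C

theorem ND.sfE {Δ Γ C} (h : ND Δ (SF Γ C)) (hall : ∀ G ∈ Γ, ND Δ G) : ND Δ C :=
  h.mp (nd_listConj_intro hall)

theorem ipcb_imp {A B : Form} (h : ND [A] B) : IPCbProves (.imp A B) := h.ded.toIpcb

theorem nd_of_ipcb_imp {Δ A B} (h : IPCbProves (.imp A B)) (hA : ND Δ A) : ND Δ B :=
  (((nd_of_ipcb h).weak (by simp)).mp hA)

theorem ipcb_comp {A B C : Form} (h1 : IPCbProves (.imp A B)) (h2 : IPCbProves (.imp B C)) :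
    IPCbProves (.imp A C) :=
  ipcb_imp (nd_of_ipcb_imp h2 (nd_of_ipcb_imp h1 ND.h0))

end PLHA
namespace PLHA
open Form

/-! ### weight and measure -/

def wt : Form → ℕ
  | .var _ => 1
  | .bot => 1
  | .and A B => wt A + wt B + 2
  | .or A B => wt A + wt B + 1
  | .imp A B => wt A + wt B + 1
  | .box _ => 1

theorem wt_pos : ∀ A : Form, 1 ≤ wt A := by
  intro A; cases A <;> simp [wt] <;> omega

def mu (Γ : List Form) (C : Form) : ℕ := ((C :: Γ).map (fun G => 4 ^ wt G)).sum

theorem pow4_lt {a r : ℕ} (h : a < r) : 4 ^ a < 4 ^ r :=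
  Nat.pow_lt_pow_right (by norm_num) h

theorem key3 {a b c r : ℕ} (ha : a < r) (hb : b < r) (hc : c < r) :
    4 ^ a + 4 ^ b + 4 ^ c < 4 ^ r := by
  have h4 : ∀ x, x < r → 4 ^ x ≤ 4 ^ (r - 1) := fun x hx =>
    Nat.pow_le_pow_right (by norm_num) (by omega)
  have hr : 4 ^ r = 4 * 4 ^ (r - 1) := by
    conv_lhs => rw [show r = (r-1)+1 by omega]
    ring
  have := h4 a ha; have := h4 b hb; have := h4 c hc
  have hp : 0 < 4 ^ (r - 1) := Nat.pow_pos (by norm_num)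
  omega

theorem key2 {a b r : ℕ} (ha : a < r) (hb : b < r) : 4 ^ a + 4 ^ b < 4 ^ r := by
  have hb0 : (0:ℕ) < 4 ^ b := Nat.pow_pos (by norm_num)
  have := key3 ha hb hb; omega

theorem mu_perm {Γ Γ' : List Form} (C : Form) (h : Γ.Perm Γ') : mu Γ C = mu Γ' C := by
  unfold mu
  exact List.Perm.sum_eq (List.Perm.map _ (List.Perm.cons _ h))

/-! ### rho facts -/

theorem rho_listDisj {l : List Form} (h : ∀ G ∈ l, rho G ≤ 1) : rho (listDisj l) ≤ 1 := by
  induction l with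
  | nil => simp [listDisj, rho]
  | cons A l ih =>
    cases l with
    | nil => exact h A (.head _)
    | cons B l =>
      show max (rho A) (rho (listDisj (B :: l))) ≤ 1
      have := h A (.head _)
      have := ih (fun G hG => h G (.tail _ hG))
      omega

/-! ### boxFree facts -/

theorem boxFree_and {A B : Form} (h : boxFree (.and A B) = true) :
    boxFree A = true ∧ boxFree B = true := by
  simpa [boxFree, Bool.and_eq_true] using h
theorem boxFree_or {A B : Form} (h : boxFree (.or A B) = true) :
    boxFree A = true ∧ boxFree B = true := by
  simpa [boxFree, Bool.and_eq_true] using h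
theorem boxFree_imp {A B : Form} (h : boxFree (.imp A B) = true) :
    boxFree A = true ∧ boxFree B = true := by
  simpa [boxFree, Bool.and_eq_true] using h

/-! ### Pres kit -/

theorem ik4_of_ipcb {A} (h : IPCbProves A) : iK4Proves A :=
  proves_mono (fun hf => hf.elim) (by simp) h

theorem hs_of_ipcb {A} (h : IPCbProves A) : HsigmaProves A :=
  proves_mono (fun hf => hf.elim) (by simp) h

theorem presIpc {A B : Form} (h : IPCbProves (.imp A B)) : Pres A B := .a1 (ik4_of_ipcb h)

theorem pres_sand {A A' B' B : Form} (e1 : IPCbProves (.imp A A')) (h : Pres A' B')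
    (e2 : IPCbProves (.imp B' B)) : Pres A B :=
  .a2 (presIpc e1) (.a2 h (presIpc e2))

theorem pres_listDisj_fold {l : List Form} {H : Form} (h : ∀ G ∈ l, Pres G H) :
    Pres (listDisj l) H := by
  induction l with
  | nil => exact presIpc (ipcb_imp ND.h0.efq)
  | cons A l ih =>
    cases l with
    | nil => exact h A (.head _)
    | cons B l =>
      exact .b1 (h A (.head _)) (ih (fun G hG => h G (.tail _ hG)))

/-! ### bracket equations -/

@[simp] theorem bracket_var {A : Form} {n} : bracket A (.var n) = .var n := rfl
@[simp] theorem bracket_bot {A : Form} : bracket A .bot = .bot := rfl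
@[simp] theorem bracket_box {A B : Form} : bracket A (.box B) = .box B := rfl
@[simp] theorem bracket_and {A B C : Form} :
    bracket A (.and B C) = .and (bracket A B) (bracket A C) := rfl
@[simp] theorem bracket_or {A B C : Form} :
    bracket A (.or B C) = .or (bracket A B) (bracket A C) := rfl
@[simp] theorem bracket_imp {A B C : Form} :
    bracket A (.imp B C) = .imp A (.imp B C) := rfl

/-! ### Hsigma kit -/

theorem hs_nec {A} (h : HsigmaProves A) : HsigmaProves (.box A) := .nec rfl h

theorem hs_K {A B} : HsigmaProves (.imp (.box (.imp A B)) (.imp (.box A) (.box B))) :=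
  .ax (Or.inl (.k A B))

theorem hs_boxMono {A B} (h : HsigmaProves (.imp A B)) :
    HsigmaProves (.imp (.box A) (.box B)) := hs_K.mp (hs_nec h)

theorem hs_iffI {A B} (h1 : HsigmaProves (.imp A B)) (h2 : HsigmaProves (.imp B A)) :
    HsigmaProves (iffF A B) := ((Proves.ipc (.a3 _ _)).mp h1).mp h2

theorem hs_iffL {A B} (h : HsigmaProves (iffF A B)) : HsigmaProves (.imp A B) :=
  (Proves.ipc (.a4 _ _)).mp h
theorem hs_iffR {A B} (h : HsigmaProves (iffF A B)) : HsigmaProves (.imp B A) :=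
  (Proves.ipc (.a5 _ _)).mp h

theorem hs_id {A} : HsigmaProves (.imp A A) := hs_of_ipcb (ND.idd (Γ := [])).toIpcb

theorem hs_iff_refl {A} : HsigmaProves (iffF A A) := hs_iffI hs_id hs_id

theorem hs_comp {A B C} (h1 : HsigmaProves (.imp A B)) (h2 : HsigmaProves (.imp B C)) :
    HsigmaProves (.imp A C) := by
  have t : IPCbProves (.imp (.imp A B) (.imp (.imp B C) (.imp A C))) := by
    refine (ND.ded (ND.ded (ND.ded ?_))).toIpcb
    exact ND.h1.mp (ND.h2.mp ND.h0)
  exact ((hs_of_ipcb t).mp h1).mp h2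

theorem ipcb_taut2 {X Y Z : Form} (h : ND [Y, X] Z) : IPCbProves (.imp X (.imp Y Z)) :=
  (h.ded.ded).toIpcb

theorem hs_and_congr {A A' B B'} (h1 : HsigmaProves (iffF A A'))
    (h2 : HsigmaProves (iffF B B')) : HsigmaProves (iffF (.and A B) (.and A' B')) := by
  have t : ∀ X X' Y Y' : Form,
      IPCbProves (.imp (iffF X X') (.imp (iffF Y Y') (.imp (.and X Y) (.and X' Y')))) := by
    intro X X' Y Y'
    refine ((ND.ded ?_).ded.ded).toIpcb
    exact ND.andI (ND.h2.andL.mp ND.h0.andL) (ND.h1.andL.mp ND.h0.andR)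
  exact hs_iffI (((hs_of_ipcb (t A A' B B')).mp h1).mp h2)
    (((hs_of_ipcb (t A' A B' B)).mp (hs_iffI (hs_iffR h1) (hs_iffL h1))).mp
      (hs_iffI (hs_iffR h2) (hs_iffL h2)))

theorem hs_or_congr {A A' B B'} (h1 : HsigmaProves (iffF A A'))
    (h2 : HsigmaProves (iffF B B')) : HsigmaProves (iffF (.or A B) (.or A' B')) := by
  have t : ∀ X X' Y Y' : Form,
      IPCbProves (.imp (iffF X X') (.imp (iffF Y Y') (.imp (.or X Y) (.or X' Y')))) := by
    intro X X' Y Y'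
    refine ((ND.ded ?_).ded.ded).toIpcb
    exact ND.h0.orE ((ND.h2.wk.andL.mp ND.h0).orIL) ((ND.h1.wk.andL.mp ND.h0).orIR)
  exact hs_iffI (((hs_of_ipcb (t A A' B B')).mp h1).mp h2)
    (((hs_of_ipcb (t A' A B' B)).mp (hs_iffI (hs_iffR h1) (hs_iffL h1))).mp
      (hs_iffI (hs_iffR h2) (hs_iffL h2)))

theorem hs_imp_congr {A A' B B'} (h1 : HsigmaProves (iffF A A'))
    (h2 : HsigmaProves (iffF B B')) : HsigmaProves (iffF (.imp A B) (.imp A' B')) := by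
  have t : ∀ X X' Y Y' : Form,
      IPCbProves (.imp (iffF X X') (.imp (iffF Y Y') (.imp (.imp X Y) (.imp X' Y')))) := by
    intro X X' Y Y'
    refine ((ND.ded ?_).ded.ded.ded).toIpcb
    -- context [X', X→Y, iffF Y Y', iffF X X']
    exact (ND.h2.andL).mp (ND.h1.mp (ND.h3.andR.mp ND.h0))
  exact hs_iffI (((hs_of_ipcb (t A A' B B')).mp h1).mp h2)
    (((hs_of_ipcb (t A' A B' B)).mp (hs_iffI (hs_iffR h1) (hs_iffL h1))).mp
      (hs_iffI (hs_iffR h2) (hs_iffL h2)))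

theorem hs_box_congr {A B} (h : HsigmaProves (iffF A B)) :
    HsigmaProves (iffF (.box A) (.box B)) :=
  hs_iffI (hs_boxMono (hs_iffL h)) (hs_boxMono (hs_iffR h))

theorem hs_subst_iff {f g : ℕ → Form} (h : ∀ n, HsigmaProves (iffF (f n) (g n))) :
    ∀ F : Form, HsigmaProves (iffF (substF f F) (substF g F))
  | .var n => h n
  | .bot => hs_iff_refl
  | .and A B => hs_and_congr (hs_subst_iff h A) (hs_subst_iff h B)
  | .or A B => hs_or_congr (hs_subst_iff h A) (hs_subst_iff h B)
  | .imp A B => hs_imp_congr (hs_subst_iff h A) (hs_subst_iff h B)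
  | .box A => hs_box_congr (hs_subst_iff h A)

end PLHA
namespace PLHA
open Form

/-! ### substitution closure -/

theorem ipcAx_subst {A : Form} (f : ℕ → Form) (h : IpcAx A) : IpcAx (substF f A) := by
  cases h <;> simp [substF] <;> constructor

theorem ipcb_subst {A : Form} (f : ℕ → Form) (h : IPCbProves A) : IPCbProves (substF f A) := by
  induction h with
  | ax h => exact h.elim
  | ipc h => exact .ipc (ipcAx_subst f h)
  | mp h1 h2 ih1 ih2 => exact .mp ih1 ih2
  | nec hb => exact (Bool.false_ne_true hb).elim

theorem k4Ax_subst {A : Form} (f : ℕ → Form) (h : K4Ax A) : K4Ax (substF f A) := by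
  cases h <;> simp [substF] <;> constructor

theorem ik4_subst {A : Form} (f : ℕ → Form) (h : iK4Proves A) : iK4Proves (substF f A) := by
  induction h with
  | ax h => exact .ax (k4Ax_subst f h)
  | ipc h => exact .ipc (ipcAx_subst f h)
  | mp h1 h2 ih1 ih2 => exact .mp ih1 ih2
  | nec hb h ih => exact .nec rfl ih

def atomBoxed (f : ℕ → Form) : Prop := ∀ n, (f n).isAtom ∨ (f n).isBoxed

theorem substF_listConj (f : ℕ → Form) : ∀ l : List Form,
    substF f (listConj l) = listConj (l.map (substF f))
  | [] => rfl
  | [A] => rfl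
  | A :: B :: l => by
    show Form.and _ _ = Form.and _ _
    rw [substF_listConj f (B :: l)]

theorem substF_listDisj (f : ℕ → Form) : ∀ l : List Form,
    substF f (listDisj l) = listDisj (l.map (substF f))
  | [] => rfl
  | [A] => rfl
  | A :: B :: l => by
    show Form.or _ _ = Form.or _ _
    rw [substF_listDisj f (B :: l)]

theorem substF_bracket {f : ℕ → Form} (hf : atomBoxed f) (A : Form) : ∀ B : Form,
    substF f (bracket A B) = bracket (substF f A) (substF f B)
  | .var n => by
    show substF f (.var n) = bracket (substF f A) (f n)
    rcases hf n with (⟨m, h⟩ | h) | ⟨B', h⟩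
    · simp [substF, h]
    · simp [substF, h]
    · simp [substF, h]
  | .bot => rfl
  | .box B => rfl
  | .and B C => by
    show Form.and _ _ = Form.and _ _
    rw [substF_bracket hf A B, substF_bracket hf A C]
  | .or B C => by
    show Form.or _ _ = Form.or _ _
    rw [substF_bracket hf A B, substF_bracket hf A C]
  | .imp B C => rfl

theorem isAtom_subst {f : ℕ → Form} (hf : atomBoxed f) {C : Form} (h : C.isAtom) :
    (substF f C).isAtom ∨ (substF f C).isBoxed := by
  rcases h with ⟨n, rfl⟩ | rfl
  · exact hf n
  · exact Or.inl (Or.inr rfl)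

theorem isBoxed_subst {f : ℕ → Form} {C : Form} (h : C.isBoxed) : (substF f C).isBoxed := by
  obtain ⟨B, rfl⟩ := h; exact ⟨substF f B, rfl⟩

theorem pres_subst {f : ℕ → Form} (hf : atomBoxed f) {A B : Form} (h : Pres A B) :
    Pres (substF f A) (substF f B) := by
  induction h with
  | a1 h => exact .a1 (ik4_subst f h)
  | a2 h1 h2 ih1 ih2 => exact .a2 ih1 ih2
  | a3 h1 h2 ih1 ih2 => exact .a3 ih1 ih2
  | a4 h ih => exact .a4 ih
  | b1 h1 h2 ih1 ih2 => exact .b1 ih1 ih2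
  | b2 X C =>
    have hb2 := Pres.b2 (X.map (fun p => (substF f p.1, substF f p.2))) (substF f C)
    have e1 : (X.map (fun p => (substF f p.1, substF f p.2))).map
        (fun p => Form.imp p.1 p.2) = (X.map (fun p => Form.imp p.1 p.2)).map (substF f) := by
      simp only [List.map_map]
      refine List.map_congr_left (fun a ha => rfl)
    have eB : listConj ((X.map (fun p => (substF f p.1, substF f p.2))).map
        (fun p => Form.imp p.1 p.2)) =
        substF f (listConj (X.map (fun p => Form.imp p.1 p.2))) := by
      rw [e1, substF_listConj]
    have e2 : ((X.map (fun p => (substF f p.1, substF f p.2))).map Prod.fst ++ [substF f C]) =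
        (X.map Prod.fst ++ [C]).map (substF f) := by
      simp [List.map_map]
    have e3 : ((X.map Prod.fst ++ [C]).map (substF f)).map
        (bracket (substF f (listConj (X.map (fun p => Form.imp p.1 p.2))))) =
        ((X.map Prod.fst ++ [C]).map
          (bracket (listConj (X.map (fun p => Form.imp p.1 p.2))))).map (substF f) := by
      simp only [List.map_map]
      refine List.map_congr_left (fun a ha => ?_)
      exact (substF_bracket hf _ a).symm
    rw [eB, e2, e3] at hb2
    have e4 : substF f (.imp (listConj (X.map (fun p => Form.imp p.1 p.2))) C) =
        .imp (substF f (listConj (X.map (fun p => Form.imp p.1 p.2)))) (substF f C) := rfl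
    rw [e4]
    have e5 : substF f (listDisj ((X.map Prod.fst ++ [C]).map
        (bracket (listConj (X.map (fun p => Form.imp p.1 p.2)))))) =
        listDisj (((X.map Prod.fst ++ [C]).map
          (bracket (listConj (X.map (fun p => Form.imp p.1 p.2))))).map (substF f)) :=
      substF_listDisj _ _
    rw [e5]
    exact hb2
  | @b3 A B C h hC ih =>
    have : Pres (.imp (substF f C) (substF f A)) (.imp (substF f C) (substF f B)) := by
      refine .b3 ih ?_
      rcases hC with h' | h'
      · exact isAtom_subst hf h'
      · exact Or.inr (isBoxed_subst h')
    exact this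

/-! ### strip lemmas -/

theorem strip_boxFree : ∀ (A : Form) (k : ℕ), boxFree (strip A k).1 = true
  | .var n, k => rfl
  | .bot, k => rfl
  | .and A B, k => by
    simp only [strip, boxFree, Bool.and_eq_true]
    exact ⟨strip_boxFree A k, strip_boxFree B _⟩
  | .or A B, k => by
    simp only [strip, boxFree, Bool.and_eq_true]
    exact ⟨strip_boxFree A k, strip_boxFree B _⟩
  | .imp A B, k => by
    simp only [strip, boxFree, Bool.and_eq_true]
    exact ⟨strip_boxFree A k, strip_boxFree B _⟩
  | .box A, k => rfl

theorem strip_bdep : ∀ (A : Form) (k : ℕ), ∀ B ∈ (strip A k).2, bdep B < bdep A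
  | .var n, k => by simp [strip]
  | .bot, k => by simp [strip]
  | .and A B, k => by
    intro G hG
    simp only [strip, List.mem_append] at hG
    simp only [bdep]
    rcases hG with hG | hG
    · exact lt_of_lt_of_le (strip_bdep A k G hG) (le_max_left _ _)
    · exact lt_of_lt_of_le (strip_bdep B _ G hG) (le_max_right _ _)
  | .or A B, k => by
    intro G hG
    simp only [strip, List.mem_append] at hG
    simp only [bdep]
    rcases hG with hG | hG
    · exact lt_of_lt_of_le (strip_bdep A k G hG) (le_max_left _ _)
    · exact lt_of_lt_of_le (strip_bdep B _ G hG) (le_max_right _ _)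
  | .imp A B, k => by
    intro G hG
    simp only [strip, List.mem_append] at hG
    simp only [bdep]
    rcases hG with hG | hG
    · exact lt_of_lt_of_le (strip_bdep A k G hG) (le_max_left _ _)
    · exact lt_of_lt_of_le (strip_bdep B _ G hG) (le_max_right _ _)
  | .box A, k => by
    intro G hG
    simp only [strip] at hG
    rcases List.mem_singleton.mp hG with rfl
    simp [bdep]

theorem strip_recon : ∀ (A : Form) (k : ℕ) (f : ℕ → Form), A.fvb ≤ k →
    (∀ n, n < A.fvb → f n = .var n) →
    (∀ i, i < (strip A k).2.length → f (k + i) = .box ((strip A k).2.getD i .bot)) →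
    substF f (strip A k).1 = A
  | .var n, k, f, hk, hv, hb => by
    simp only [strip, substF]
    exact hv n (by simp [fvb])
  | .bot, k, f, _, _, _ => rfl
  | .and A B, k, f, hk, hv, hb => by
    simp only [strip, substF]
    simp only [fvb, max_le_iff] at hk
    have hlen : (strip (Form.and A B) k).2.length =
        (strip A k).2.length + (strip B (k + (strip A k).2.length)).2.length := by
      simp [strip]
    have h1 : substF f (strip A k).1 = A := by
      refine strip_recon A k f hk.1 (fun n hn => hv n (by simp [fvb]; omega)) ?_
      intro i hi
      have := hb i (by simpa [strip] using by omega)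
      rw [this]
      congr 1
      simp only [strip]
      rw [List.getD_append _ _ _ _ hi]
    have h2 : substF f (strip B (k + (strip A k).2.length)).1 = B := by
      refine strip_recon B (k + (strip A k).2.length) f (by omega)
        (fun n hn => hv n (by simp [fvb]; omega)) ?_
      intro i hi
      have := hb ((strip A k).2.length + i) (by simp [strip]; omega)
      rw [show k + (strip A k).2.length + i = k + ((strip A k).2.length + i) by omega, this]
      congr 1
      simp only [strip]
      rw [List.getD_append_right _ _ _ _ (by omega)]
      congr 1
      omega
    rw [h1, h2]
  | .or A B, k, f, hk, hv, hb => by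
    simp only [strip, substF]
    simp only [fvb, max_le_iff] at hk
    have h1 : substF f (strip A k).1 = A := by
      refine strip_recon A k f hk.1 (fun n hn => hv n (by simp [fvb]; omega)) ?_
      intro i hi
      have := hb i (by simpa [strip] using by omega)
      rw [this]
      congr 1
      simp only [strip]
      rw [List.getD_append _ _ _ _ hi]
    have h2 : substF f (strip B (k + (strip A k).2.length)).1 = B := by
      refine strip_recon B (k + (strip A k).2.length) f (by omega)
        (fun n hn => hv n (by simp [fvb]; omega)) ?_
      intro i hi
      have := hb ((strip A k).2.length + i) (by simp [strip]; omega)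
      rw [show k + (strip A k).2.length + i = k + ((strip A k).2.length + i) by omega, this]
      congr 1
      simp only [strip]
      rw [List.getD_append_right _ _ _ _ (by omega)]
      congr 1
      omega
    rw [h1, h2]
  | .imp A B, k, f, hk, hv, hb => by
    simp only [strip, substF]
    simp only [fvb, max_le_iff] at hk
    have h1 : substF f (strip A k).1 = A := by
      refine strip_recon A k f hk.1 (fun n hn => hv n (by simp [fvb]; omega)) ?_
      intro i hi
      have := hb i (by simpa [strip] using by omega)
      rw [this]
      congr 1
      simp only [strip]
      rw [List.getD_append _ _ _ _ hi]
    have h2 : substF f (strip B (k + (strip A k).2.length)).1 = B := by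
      refine strip_recon B (k + (strip A k).2.length) f (by omega)
        (fun n hn => hv n (by simp [fvb]; omega)) ?_
      intro i hi
      have := hb ((strip A k).2.length + i) (by simp [strip]; omega)
      rw [show k + (strip A k).2.length + i = k + ((strip A k).2.length + i) by omega, this]
      congr 1
      simp only [strip]
      rw [List.getD_append_right _ _ _ _ (by omega)]
      congr 1
      omega
    rw [h1, h2]
  | .box A, k, f, hk, hv, hb => by
    simp only [strip, substF]
    have := hb 0 (by simp [strip])
    simpa [strip] using this

/-! ### plusAux fuel  -/

theorem plusAux_fuel (star : Form → Form) : ∀ (b : ℕ) (A : Form) (f₁ f₂ : ℕ),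
    A.bdep ≤ b → A.bdep < f₁ → A.bdep < f₂ →
    plusAux star f₁ A = plusAux star f₂ A := by
  intro b
  induction b with
  | zero =>
    intro A f₁ f₂ hb h1 h2
    obtain ⟨n₁, rfl⟩ : ∃ n, f₁ = n + 1 := ⟨f₁ - 1, by omega⟩
    obtain ⟨n₂, rfl⟩ : ∃ n, f₂ = n + 1 := ⟨f₂ - 1, by omega⟩
    simp only [plusAux]
    congr 1
    funext n
    split
    · next hcond =>
      obtain ⟨hc1, hc2⟩ := hcond
      exfalso
      have hmem : (strip A A.fvb).2.getD (n - A.fvb) .bot ∈ (strip A A.fvb).2 := by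
        rw [List.getD_eq_getElem _ _ (by omega)]
        exact List.getElem_mem _
      exact absurd (strip_bdep A A.fvb _ hmem) (by omega)
    · rfl
  | succ b ih =>
    intro A f₁ f₂ hb h1 h2
    obtain ⟨n₁, rfl⟩ : ∃ n, f₁ = n + 1 := ⟨f₁ - 1, by omega⟩
    obtain ⟨n₂, rfl⟩ : ∃ n, f₂ = n + 1 := ⟨f₂ - 1, by omega⟩
    simp only [plusAux]
    congr 1
    funext n
    split
    · next hcond =>
      obtain ⟨hc1, hc2⟩ := hcond
      have hmem : (strip A A.fvb).2.getD (n - A.fvb) .bot ∈ (strip A A.fvb).2 := by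
        rw [List.getD_eq_getElem _ _ (by omega)]
        exact List.getElem_mem _
      have hlt := strip_bdep A A.fvb _ hmem
      rw [ih _ n₁ n₂ (by omega) (by omega) (by omega)]
    · rfl

end PLHA
namespace PLHA
open Form

theorem pres_id {A : Form} : Pres A A := presIpc (ND.idd (Γ := [])).toIpcb

theorem transfer {A A' : Form} (e1 : IPCbProves (.imp A A')) (e2 : IPCbProves (.imp A' A))
    (h : ∃ H, rho H ≤ 1 ∧ IPCbProves (.imp H A') ∧ Pres A' H) :
    ∃ H, rho H ≤ 1 ∧ IPCbProves (.imp H A) ∧ Pres A H := by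
  obtain ⟨H, h1, h2, h3⟩ := h
  exact ⟨H, h1, ipcb_comp h2 e2, .a2 (presIpc e1) h3⟩

theorem transfer2 {A A₁ A₂ : Form} (e1 : IPCbProves (.imp A A₁)) (e1' : IPCbProves (.imp A A₂))
    (e2 : IPCbProves (.imp A₁ (.imp A₂ A)))
    (h : ∃ H, rho H ≤ 1 ∧ IPCbProves (.imp H A₁) ∧ Pres A₁ H)
    (h' : ∃ H, rho H ≤ 1 ∧ IPCbProves (.imp H A₂) ∧ Pres A₂ H) :
    ∃ H, rho H ≤ 1 ∧ IPCbProves (.imp H A) ∧ Pres A H := by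
  obtain ⟨H₁, r1, s1, p1⟩ := h
  obtain ⟨H₂, r2, s2, p2⟩ := h'
  refine ⟨.and H₁ H₂, by simp [rho]; omega, ?_, ?_⟩
  · refine ipcb_imp ?_
    have hA₁ : ND [Form.and H₁ H₂] A₁ := nd_of_ipcb_imp s1 ND.h0.andL
    have hA₂ : ND [Form.and H₁ H₂] A₂ := nd_of_ipcb_imp s2 ND.h0.andR
    exact (nd_of_ipcb_imp e2 hA₁).mp hA₂
  · exact .a3 (.a2 (presIpc e1) p1) (.a2 (presIpc e1') p2)

/-- the Ψ-lemma : NNIL approximations of [B]C' -/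
theorem psi (B : Form) (W : ℕ)
    (hrec : ∀ D₁ D₂ : Form, wt (Form.imp D₁ D₂) < W → boxFree (Form.imp D₁ D₂) = true →
      ∃ H, rho H ≤ 1 ∧ IPCbProves (.imp H (.imp B (.imp D₁ D₂))) ∧
        Pres (.imp B (.imp D₁ D₂)) H) :
    ∀ (m : ℕ) (C' : Form), wt C' ≤ m → wt C' < W → boxFree C' = true →
      ∃ H, rho H ≤ 1 ∧ IPCbProves (.imp H (.imp B C')) ∧ Pres (bracket B C') H := by
  intro m
  induction m with
  | zero => intro C' h; have := wt_pos C'; omega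
  | succ m ih =>
    intro C' hm hW hbf
    match C' with
    | .var v =>
      refine ⟨.var v, by simp [rho], ?_, ?_⟩
      · exact (ND.ded (ND.ded ND.h1)).toIpcb
      · simpa using pres_id
    | .bot =>
      refine ⟨.bot, by simp [rho], ?_, ?_⟩
      · exact (ND.ded (ND.ded ND.h1.efq)).toIpcb
      · simpa using pres_id
    | .and C₁ C₂ =>
      have hw1 := wt_pos C₁; have hw2 := wt_pos C₂
      have hwA : wt (Form.and C₁ C₂) = wt C₁ + wt C₂ + 2 := rfl
      obtain ⟨H₁, r1, s1, p1⟩ := ih C₁ (by omega) (by omega) (boxFree_and hbf).1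
      obtain ⟨H₂, r2, s2, p2⟩ := ih C₂ (by omega) (by omega) (boxFree_and hbf).2
      refine ⟨.and H₁ H₂, by simp [rho]; omega, ?_, ?_⟩
      · refine (ND.ded (ND.ded ?_)).toIpcb
        -- [B, H₁ ∧ H₂]
        exact ND.andI ((nd_of_ipcb_imp s1 ND.h1.andL).mp ND.h0)
          ((nd_of_ipcb_imp s2 ND.h1.andR).mp ND.h0)
      · rw [bracket_and]
        exact .a3 (.a2 (presIpc (ipcb_imp ND.h0.andL)) p1)
          (.a2 (presIpc (ipcb_imp ND.h0.andR)) p2)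
    | .or C₁ C₂ =>
      have hw1 := wt_pos C₁; have hw2 := wt_pos C₂
      have hwA : wt (Form.or C₁ C₂) = wt C₁ + wt C₂ + 1 := rfl
      obtain ⟨H₁, r1, s1, p1⟩ := ih C₁ (by omega) (by omega) (boxFree_or hbf).1
      obtain ⟨H₂, r2, s2, p2⟩ := ih C₂ (by omega) (by omega) (boxFree_or hbf).2
      refine ⟨.or H₁ H₂, by simp [rho]; omega, ?_, ?_⟩
      · refine (ND.ded (ND.ded ?_)).toIpcb
        -- [B, H₁ ∨ H₂]
        refine ND.h1.orE ?_ ?_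
        · exact (((nd_of_ipcb_imp s1 ND.h0).mp ND.h1).orIL)
        · exact (((nd_of_ipcb_imp s2 ND.h0).mp ND.h1).orIR)
      · rw [bracket_or]
        exact .b1 (.a2 p1 (presIpc (ipcb_imp ND.h0.orIL)))
          (.a2 p2 (presIpc (ipcb_imp ND.h0.orIR)))
    | .imp D₁ D₂ =>
      obtain ⟨H, r, s, p⟩ := hrec D₁ D₂ hW hbf
      exact ⟨H, r, s, by rw [bracket_imp]; exact p⟩
    | .box D => simp [boxFree] at hbf

/-- the handler of one b2-disjunct coming from a member (E,F). -/
theorem branch_pair (n : ℕ)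
    (IH : ∀ Γ C, mu Γ C ≤ n → (∀ G ∈ C :: Γ, boxFree G = true) →
      ∃ H, rho H ≤ 1 ∧ IPCbProves (.imp H (SF Γ C)) ∧ Pres (SF Γ C) H)
    (Γ : List Form) (C E F : Form)
    (hm : Form.imp E F ∈ Γ) (hmu : mu Γ C ≤ n + 1)
    (hbf : ∀ G ∈ C :: Γ, boxFree G = true)
    (hE : (∃ v, E = .var v) ∨ (∃ D D', E = .imp D D')) :
    ∃ Hd, rho Hd ≤ 1 ∧ IPCbProves (.imp Hd (SF Γ C)) ∧
      Pres (.and (SF Γ C) (bracket (listConj Γ) E)) Hd := by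
  set m : Form := Form.imp E F with hmdef
  have hperm : Γ.Perm (m :: Γ.erase m) := List.perm_cons_erase hm
  have hsub : ∀ G ∈ Γ, G = m ∨ G ∈ Γ.erase m := fun G hG => List.mem_cons.mp (hperm.subset hG)
  have hsub2 : ∀ G ∈ Γ.erase m, G ∈ Γ := fun G hG => List.mem_of_mem_erase hG
  have hmuΓ : mu Γ C = 4 ^ wt C + (4 ^ wt m + ((Γ.erase m).map (fun G => 4 ^ wt G)).sum) := by
    rw [mu_perm C hperm]; simp [mu]
  have hbfm : boxFree m = true := hbf m (.tail _ hm)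
  have hbfE : boxFree E = true := (boxFree_imp hbfm).1
  have hbfF : boxFree F = true := (boxFree_imp hbfm).2
  have hbferase : ∀ G ∈ Γ.erase m, boxFree G = true := fun G hG => hbf G (.tail _ (hsub2 G hG))
  have hbfC : boxFree C = true := hbf C (.head _)
  -- main recursive call (Γ' = F :: Γ.erase m , C)
  have hwtEF : wt m = wt E + wt F + 1 := rfl
  have hwE := wt_pos E; have hwF := wt_pos F
  have hmu' : mu (F :: Γ.erase m) C ≤ n := by
    have h1 : (4:ℕ) ^ wt F < 4 ^ wt m := pow4_lt (by omega)
    have : mu (F :: Γ.erase m) C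
        = 4 ^ wt C + (4 ^ wt F + ((Γ.erase m).map (fun G => 4 ^ wt G)).sum) := by
      simp [mu]
    omega
  obtain ⟨H', r', s', p'⟩ := IH (F :: Γ.erase m) C hmu' (by
    intro G hG
    rcases List.mem_cons.mp hG with rfl | hG
    · exact hbfC
    · rcases List.mem_cons.mp hG with rfl | hG
      · exact hbfF
      · exact hbferase G hG)
  rcases hE with ⟨v, rfl⟩ | ⟨D, D', rfl⟩
  · -- E = var v
    have e1 : IPCbProves (.imp (.and (SF Γ C) (.var v)) (SF (F :: Γ.erase m) C)) := by
      refine ipcb_imp (ND.ded ?_)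
      -- ctx : [listConj (F :: Γ.erase m), and (SF Γ C) (var v)]
      refine ND.h1.andL.mp (nd_listConj_intro ?_)
      intro G hG
      rcases hsub G hG with rfl | hG
      · exact (ND.ax (.a1 F (.var v))).mp (nd_listConj_elim ND.h0 (.head _))
      · exact nd_listConj_elim ND.h0 (.tail _ hG)
    refine ⟨.and (.var v) H', by simp [rho]; omega, ?_, ?_⟩
    · refine ipcb_imp (ND.ded ?_)
      -- ctx : [listConj Γ, and (var v) H']
      have hv : ND [listConj Γ, Form.and (.var v) H'] (.var v) := ND.h1.andL
      have hH' : ND [listConj Γ, Form.and (.var v) H'] (SF (F :: Γ.erase m) C) :=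
        nd_of_ipcb_imp s' ND.h1.andR
      refine hH'.mp (nd_listConj_intro ?_)
      intro G hG
      rcases List.mem_cons.mp hG with rfl | hG
      · exact (nd_listConj_elim ND.h0 hm).mp hv
      · exact nd_listConj_elim ND.h0 (hsub2 G hG)
    · rw [bracket_var]
      exact .a3 (presIpc (ipcb_imp ND.h0.andR)) (.a2 (presIpc e1) p')
  · -- E = imp D D'
    have hbfD : boxFree D = true := (boxFree_imp hbfE).1
    have hbfD' : boxFree D' = true := (boxFree_imp hbfE).2
    have hwD := wt_pos D; have hwD' := wt_pos D'
    have hwtE : wt (Form.imp D D') = wt D + wt D' + 1 := rfl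
    have hwtD'F : wt (Form.imp D' F) = wt D' + wt F + 1 := rfl
    have hmuK : mu (D :: Form.imp D' F :: Γ.erase m) D' ≤ n := by
      have hk : (4:ℕ) ^ wt D' + (4 ^ wt D + 4 ^ wt (Form.imp D' F)) < 4 ^ wt m := by
        have := key3 (a := wt D') (b := wt D) (c := wt (Form.imp D' F)) (r := wt m)
          (by omega) (by omega) (by omega)
        omega
      have hpow : (0:ℕ) < 4 ^ wt C := Nat.pow_pos (by norm_num)
      have : mu (D :: Form.imp D' F :: Γ.erase m) D' =
          4 ^ wt D' + (4 ^ wt D + (4 ^ wt (Form.imp D' F)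
            + ((Γ.erase m).map (fun G => 4 ^ wt G)).sum)) := by
        simp [mu]
      omega
    obtain ⟨K', rK, sK, pK⟩ := IH (D :: Form.imp D' F :: Γ.erase m) D' hmuK (by
      intro G hG
      rcases List.mem_cons.mp hG with rfl | hG
      · exact hbfD'
      rcases List.mem_cons.mp hG with rfl | hG
      · exact hbfD
      rcases List.mem_cons.mp hG with rfl | hG
      · simpa [boxFree, Bool.and_eq_true] using ⟨hbfD', hbfF⟩
      · exact hbferase G hG)
    set A : Form := SF Γ C with hAdef
    set B : Form := listConj Γ with hBdef
    set E : Form := Form.imp D D' with hEdef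
    -- e1 : A ∧ (B → E) → SF Γ' C
    have e1 : IPCbProves (.imp (.and A (.imp B E)) (SF (F :: Γ.erase m) C)) := by
      refine ipcb_imp (ND.ded ?_)
      -- ctx : [listConj (F :: erase), and A (imp B E)]
      refine ND.h1.andL.mp (nd_listConj_intro ?_)
      intro G hG
      rcases hsub G hG with rfl | hG
      · exact (ND.ax (.a1 F E)).mp (nd_listConj_elim ND.h0 (.head _))
      · exact nd_listConj_elim ND.h0 (.tail _ hG)
    -- eK : A ∧ (B → E) → SF Γk D'
    have eK : IPCbProves (.imp (.and A (.imp B E))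
        (SF (D :: Form.imp D' F :: Γ.erase m) D')) := by
      refine ipcb_imp (ND.ded ?_)
      -- ctx : [listConj Γk, and A (imp B E)]
      have hD : ND [listConj (D :: Form.imp D' F :: Γ.erase m), Form.and A (.imp B E)] D :=
        nd_listConj_elim ND.h0 (.head _)
      have hD'F : ND [listConj (D :: Form.imp D' F :: Γ.erase m), Form.and A (.imp B E)]
          (.imp D' F) := nd_listConj_elim ND.h0 (.tail _ (.head _))
      have hB : ND [listConj (D :: Form.imp D' F :: Γ.erase m), Form.and A (.imp B E)] B := by
        refine nd_listConj_intro ?_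
        intro G hG
        rcases hsub G hG with rfl | hG
        · -- G = imp E F : assume E, get D' (by mp with D), get F
          refine ND.ded ?_
          exact hD'F.wk.mp (ND.h0.mp hD.wk)
        · exact nd_listConj_elim ND.h0 (.tail _ (.tail _ hG))
      exact (ND.h1.andR.mp hB).mp hD
    refine ⟨.and K' H', by simp [rho]; omega, ?_, ?_⟩
    · -- soundness : K' ∧ H' → A
      refine ipcb_imp (ND.ded ?_)
      -- ctx0 : [listConj Γ, and K' H']
      have hK' : ND [listConj Γ, Form.and K' H'] (SF (D :: Form.imp D' F :: Γ.erase m) D') :=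
        nd_of_ipcb_imp sK ND.h1.andL
      have hH' : ND [listConj Γ, Form.and K' H'] (SF (F :: Γ.erase m) C) :=
        nd_of_ipcb_imp s' ND.h1.andR
      have hEpf : ND [listConj Γ, Form.and K' H'] E := by
        refine ND.ded ?_
        -- ctx1 : D :: ctx0 ⊢ D'
        refine hK'.wk.mp (nd_listConj_intro ?_)
        intro G hG
        rcases List.mem_cons.mp hG with rfl | hG
        · exact ND.h0
        rcases List.mem_cons.mp hG with rfl | hG
        · -- imp D' F from m ∈ Γ
          refine ND.ded ?_
          -- ctx2 : D' :: D :: ctx0 ⊢ F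
          exact (nd_listConj_elim ND.h2 hm).mp ((ND.ax (.a1 D' D)).mp ND.h0)
        · exact nd_listConj_elim ND.h1 (hsub2 G hG)
      have hF : ND [listConj Γ, Form.and K' H'] F := (nd_listConj_elim ND.h0 hm).mp hEpf
      refine hH'.mp (nd_listConj_intro ?_)
      intro G hG
      rcases List.mem_cons.mp hG with rfl | hG
      · exact hF
      · exact nd_listConj_elim ND.h0 (hsub2 G hG)
    · -- Pres (and A (bracket B E)) (and K' H')
      rw [hEdef, bracket_imp]
      exact .a3 (.a2 (presIpc eK) pK) (.a2 (presIpc e1) p')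

end PLHA
namespace PLHA
open Form

def ready (G : Form) : Prop :=
  ∃ E F, G = Form.imp E F ∧ ((∃ v, E = .var v) ∨ (∃ D D', E = .imp D D'))

theorem mem_insL {Γ₁ Γ₂ : List Form} {G X : Form} (h : G ∈ Γ₁) : G ∈ Γ₁ ++ X :: Γ₂ :=
  List.mem_append_left _ h
theorem mem_insR {Γ₁ Γ₂ : List Form} {G X : Form} (h : G ∈ Γ₂) : G ∈ Γ₁ ++ X :: Γ₂ :=
  List.mem_append_right _ (.tail _ h)
theorem mem_insX {Γ₁ Γ₂ : List Form} {X : Form} : X ∈ Γ₁ ++ X :: Γ₂ :=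
  List.mem_append_right _ (.head _)
theorem mem_split {Γ₁ Γ₂ : List Form} {G X : Form} :
    G ∈ Γ₁ ++ X :: Γ₂ ↔ G ∈ Γ₁ ∨ G = X ∨ G ∈ Γ₂ := by
  simp [List.mem_append, List.mem_cons]

theorem mu_split (Γ₁ Γ₂ : List Form) (X C : Form) :
    mu (Γ₁ ++ X :: Γ₂) C = 4 ^ wt C + (Γ₁.map (fun G => 4 ^ wt G)).sum + 4 ^ wt X
      + (Γ₂.map (fun G => 4 ^ wt G)).sum := by
  simp [mu, List.map_append]; ring

theorem mu_split2 (Γ₁ Γ₂ : List Form) (X Y C : Form) :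
    mu (Γ₁ ++ X :: Y :: Γ₂) C = 4 ^ wt C + (Γ₁.map (fun G => 4 ^ wt G)).sum + 4 ^ wt X
      + 4 ^ wt Y + (Γ₂.map (fun G => 4 ^ wt G)).sum := by
  simp [mu, List.map_append]; ring

theorem mu_del (Γ₁ Γ₂ : List Form) (C : Form) :
    mu (Γ₁ ++ Γ₂) C = 4 ^ wt C + (Γ₁.map (fun G => 4 ^ wt G)).sum
      + (Γ₂.map (fun G => 4 ^ wt G)).sum := by
  simp [mu, List.map_append]; ring

theorem mu_cons (G : Form) (Γ : List Form) (C : Form) :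
    mu (G :: Γ) C = 4 ^ wt C + 4 ^ wt G + (Γ.map (fun G => 4 ^ wt G)).sum := by
  simp [mu]; ring

theorem mu_plain (Γ : List Form) (C : Form) :
    mu Γ C = 4 ^ wt C + (Γ.map (fun G => 4 ^ wt G)).sum := by
  simp [mu]

theorem ipcb_SF_mono {Γ Γ' : List Form} {C : Form}
    (h : ∀ Δ : List Form, (∀ G' ∈ Γ', ND Δ G') → ∀ G ∈ Γ, ND Δ G) :
    IPCbProves (.imp (SF Γ C) (SF Γ' C)) := by
  refine ipcb_imp (ND.ded ?_)
  exact ND.h1.mp (nd_listConj_intro (h _ (fun G' hG' => nd_listConj_elim ND.h0 hG')))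

theorem list_choice {α β : Type*} {P : α → β → Prop} :
    ∀ l : List α, (∀ a ∈ l, ∃ b, P a b) → ∃ l', List.Forall₂ P l l'
  | [], _ => ⟨[], .nil⟩
  | a :: l, h => by
    obtain ⟨b, hb⟩ := h a (.head _)
    obtain ⟨l', hl'⟩ := list_choice l (fun x hx => h x (.tail _ hx))
    exact ⟨b :: l', .cons hb hl'⟩

theorem forall₂_mem_right {α β : Type*} {P : α → β → Prop} :
    ∀ {l : List α} {l' : List β}, List.Forall₂ P l l' → ∀ b ∈ l', ∃ a ∈ l, P a b := by
  intro l l' h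
  induction h with
  | nil => intro b hb; exact absurd hb List.not_mem_nil
  | cons h₁ h₂ ih =>
    intro b hb
    rcases List.mem_cons.mp hb with rfl | hb
    · exact ⟨_, .head _, h₁⟩
    · obtain ⟨a, ha, hP⟩ := ih b hb
      exact ⟨a, .tail _ ha, hP⟩

theorem forall₂_mem_left {α β : Type*} {P : α → β → Prop} :
    ∀ {l : List α} {l' : List β}, List.Forall₂ P l l' → ∀ a ∈ l, ∃ b ∈ l', P a b := by
  intro l l' h
  induction h with
  | nil => intro a ha; exact absurd ha List.not_mem_nil
  | cons h₁ h₂ ih =>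
    intro a ha
    rcases List.mem_cons.mp ha with rfl | ha
    · exact ⟨_, .head _, h₁⟩
    · obtain ⟨b, hb, hP⟩ := ih a ha
      exact ⟨b, .tail _ hb, hP⟩

def toPair : Form → Form × Form
  | .imp E F => (E, F)
  | G => (G, G)

end PLHA
namespace PLHA
open Form

theorem hardCase (n : ℕ)
    (IH : ∀ Γ C, mu Γ C ≤ n → (∀ G ∈ C :: Γ, boxFree G = true) →
      ∃ H, rho H ≤ 1 ∧ IPCbProves (.imp H (SF Γ C)) ∧ Pres (SF Γ C) H)
    (Γ : List Form) (C : Form)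
    (hready : ∀ G ∈ Γ, ready G) (hmu : mu Γ C ≤ n + 1)
    (hbf : ∀ G ∈ C :: Γ, boxFree G = true)
    (hCshape : (∃ v, C = .var v) ∨ C = .bot ∨ ∃ C₁ C₂, C = .or C₁ C₂) :
    ∃ H, rho H ≤ 1 ∧ IPCbProves (.imp H (SF Γ C)) ∧ Pres (SF Γ C) H := by
  have hX : (Γ.map toPair).map (fun p => Form.imp p.1 p.2) = Γ := by
    rw [List.map_map]
    conv_rhs => rw [← List.map_id Γ]
    refine List.map_congr_left ?_
    intro G hG
    obtain ⟨E, F, rfl, _⟩ := hready G hG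
    rfl
  have hb2 : Pres (SF Γ C)
      (listDisj (((Γ.map toPair).map Prod.fst ++ [C]).map (bracket (listConj Γ)))) := by
    have h := Pres.b2 (Γ.map toPair) C
    rw [hX] at h
    exact h
  have hrec : ∀ D₁ D₂ : Form, wt (Form.imp D₁ D₂) < wt C →
      boxFree (Form.imp D₁ D₂) = true →
      ∃ H, rho H ≤ 1 ∧ IPCbProves (.imp H (.imp (listConj Γ) (.imp D₁ D₂))) ∧
        Pres (.imp (listConj Γ) (.imp D₁ D₂)) H := by
    intro D₁ D₂ hw hbfD
    have hmu' : mu Γ (.imp D₁ D₂) ≤ n := by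
      have h1 := mu_plain Γ C
      have h2 := mu_plain Γ (.imp D₁ D₂)
      have := pow4_lt hw
      omega
    exact IH Γ _ hmu' (fun G hG => by
      rcases List.mem_cons.mp hG with rfl | hG
      · exact hbfD
      · exact hbf G (.tail _ hG))
  have hCbranch : ∃ Hc, rho Hc ≤ 1 ∧ IPCbProves (.imp Hc (SF Γ C)) ∧
      Pres (.and (SF Γ C) (bracket (listConj Γ) C)) Hc := by
    rcases hCshape with ⟨v, rfl⟩ | rfl | ⟨C₁, C₂, rfl⟩
    · refine ⟨.var v, by simp [rho], (ND.ded (ND.ded ND.h1)).toIpcb, ?_⟩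
      rw [bracket_var]
      exact presIpc (ipcb_imp ND.h0.andR)
    · refine ⟨.bot, by simp [rho], (ND.ded ND.h0.efq).toIpcb, ?_⟩
      rw [bracket_bot]
      exact presIpc (ipcb_imp ND.h0.andR)
    · have hbf12 := boxFree_or (hbf _ (.head _))
      obtain ⟨H₁, r1, s1, p1⟩ := psi (listConj Γ) (wt (Form.or C₁ C₂)) hrec (wt C₁) C₁
        le_rfl (by have := wt_pos C₂; simp [wt]) hbf12.1
      obtain ⟨H₂, r2, s2, p2⟩ := psi (listConj Γ) (wt (Form.or C₁ C₂)) hrec (wt C₂) C₂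
        le_rfl (by have := wt_pos C₁; simp [wt]) hbf12.2
      refine ⟨.or H₁ H₂, by simp [rho]; omega, ?_, ?_⟩
      · refine ipcb_imp (ND.ded ?_)
        -- ctx [listConj Γ, or H₁ H₂]
        refine ND.h1.orE ?_ ?_
        · exact (((nd_of_ipcb_imp s1 ND.h0).mp ND.h1).orIL)
        · exact (((nd_of_ipcb_imp s2 ND.h0).mp ND.h1).orIR)
      · rw [bracket_or]
        refine .a2 (presIpc (ipcb_imp ND.h0.andR)) (.b1 ?_ ?_)
        · exact .a2 p1 (presIpc (ipcb_imp ND.h0.orIL))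
        · exact .a2 p2 (presIpc (ipcb_imp ND.h0.orIR))
  have hall : ∀ Z ∈ ((Γ.map toPair).map Prod.fst ++ [C]).map (bracket (listConj Γ)),
      ∃ Hd, rho Hd ≤ 1 ∧ IPCbProves (.imp Hd (SF Γ C)) ∧
        Pres (.and (SF Γ C) Z) Hd := by
    intro Z hZ
    obtain ⟨Y, hY, rfl⟩ := List.mem_map.mp hZ
    rcases List.mem_append.mp hY with hY | hY
    · obtain ⟨p, hp, rfl⟩ := List.mem_map.mp hY
      have hmem : Form.imp p.1 p.2 ∈ Γ := by
        rw [← hX]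
        exact List.mem_map_of_mem hp
      obtain ⟨E, F, heq, hsh⟩ := hready _ hmem
      injection heq with h1 h2
      subst h1; subst h2
      exact branch_pair n IH Γ C p.1 p.2 hmem hmu hbf hsh
    · rcases List.mem_singleton.mp hY with rfl
      exact hCbranch
  obtain ⟨HL, hHL⟩ := list_choice _ hall
  refine ⟨listDisj HL, ?_, ?_, ?_⟩
  · refine rho_listDisj ?_
    intro Hd hHd
    obtain ⟨Z, hZ, hP⟩ := forall₂_mem_right hHL Hd hHd
    exact hP.1
  · refine ipcb_imp ?_
    refine nd_listDisj_elim ND.h0 ?_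
    intro Hd hHd
    obtain ⟨Z, hZ, hP⟩ := forall₂_mem_right hHL Hd hHd
    exact nd_of_ipcb_imp hP.2.1 ND.h0
  · refine .a2 (.a2 (.a3 pres_id hb2) (presIpc (ipcb_imp (nd_distrib ND.h0)))) ?_
    refine pres_listDisj_fold ?_
    intro G' hG'
    obtain ⟨Z, hZ, rfl⟩ := List.mem_map.mp hG'
    obtain ⟨Hd, hHd, hP⟩ := forall₂_mem_left hHL Z hZ
    exact .a2 hP.2.2 (presIpc (ipcb_imp (nd_listDisj_of_mem hHd ND.h0)))

end PLHA
namespace PLHA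
open Form

/-- The core lemma : every box-free sequent has an NNIL ▶-approximation. -/
theorem core : ∀ (n : ℕ) (Γ : List Form) (C : Form), mu Γ C ≤ n →
    (∀ G ∈ C :: Γ, boxFree G = true) →
    ∃ H, rho H ≤ 1 ∧ IPCbProves (.imp H (SF Γ C)) ∧ Pres (SF Γ C) H := by
  intro n
  induction n with
  | zero =>
    intro Γ C hmu _
    exfalso
    have : (0:ℕ) < 4 ^ wt C := Nat.pow_pos (by norm_num)
    have := mu_plain Γ C
    omega
  | succ n IH =>
    intro Γ C hmu hbf
    have hbfC : boxFree C = true := hbf C (.head _)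
    rcases Classical.em (∀ G ∈ Γ, ready G) with hready | hnready
    case inr =>
      -- some non-ready member : simplify it
      obtain ⟨G, hG, hnr⟩ : ∃ G ∈ Γ, ¬ ready G := by
        push_neg at hnready; exact hnready
      obtain ⟨Γ₁, Γ₂, rfl⟩ := List.append_of_mem hG
      have hbfG : boxFree G = true := hbf G (.tail _ mem_insX)
      have hbfΓ : ∀ G' ∈ Γ₁ ++ G :: Γ₂, boxFree G' = true := fun G' hG' => hbf G' (.tail _ hG')
      have hbf1 : ∀ G' ∈ Γ₁, boxFree G' = true := fun G' hG' => hbfΓ G' (mem_insL hG')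
      have hbf2 : ∀ G' ∈ Γ₂, boxFree G' = true := fun G' hG' => hbfΓ G' (mem_insR hG')
      match G, hbfG, hnr with
      | .bot, _, _ =>
        refine ⟨Form.top, by simp [Form.top, rho], ?_, ?_⟩
        · refine ipcb_imp (ND.ded ?_)
          exact (nd_listConj_elim ND.h0 mem_insX).efq
        · exact presIpc (ipcb_imp ND.topI)
      | .var v, _, _ =>
        have hmu' : mu (Γ₁ ++ Γ₂) C ≤ n := by
          have h1 := mu_split Γ₁ Γ₂ (.var v) C
          have h2 := mu_del Γ₁ Γ₂ C
          have : (0:ℕ) < 4 ^ wt (Form.var v) := Nat.pow_pos (by norm_num)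
          omega
        obtain ⟨H', r', s', p'⟩ := IH (Γ₁ ++ Γ₂) C hmu' (by
          intro G' hG'
          rcases List.mem_cons.mp hG' with rfl | hG'
          · exact hbfC
          · rcases List.mem_append.mp hG' with h | h
            · exact hbf1 _ h
            · exact hbf2 _ h)
        have e_to : IPCbProves (.imp (SF (Γ₁ ++ .var v :: Γ₂) C)
            (.imp (.var v) (SF (Γ₁ ++ Γ₂) C))) := by
          refine (ND.ded (ND.ded (ND.ded ?_))).toIpcb
          -- ctx [listConj (Γ₁++Γ₂), var v, SF Γ C]
          refine ND.h2.mp (nd_listConj_intro ?_)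
          intro G' hG'
          rcases mem_split.mp hG' with h | rfl | h
          · exact nd_listConj_elim ND.h0 (List.mem_append_left _ h)
          · exact ND.h1
          · exact nd_listConj_elim ND.h0 (List.mem_append_right _ h)
        refine ⟨.imp (.var v) H', by simp [rho]; omega, ?_, ?_⟩
        · refine ipcb_imp (ND.ded ?_)
          -- ctx [listConj Γ, imp (var v) H']
          have hv : ND [listConj (Γ₁ ++ Form.var v :: Γ₂), Form.imp (.var v) H'] (.var v) :=
            nd_listConj_elim ND.h0 mem_insX
          have hH' := ND.h1.mp hv
          refine (nd_of_ipcb_imp s' hH').mp (nd_listConj_intro ?_)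
          intro G' hG'
          rcases List.mem_append.mp hG' with h | h
          · exact nd_listConj_elim ND.h0 (mem_insL h)
          · exact nd_listConj_elim ND.h0 (mem_insR h)
        · exact .a2 (presIpc e_to) (.b3 p' (Or.inl (Or.inl ⟨v, rfl⟩)))
      | .and G₁ G₂, hbfG, _ =>
        have hbf12 := boxFree_and hbfG
        have hmu' : mu (Γ₁ ++ G₁ :: G₂ :: Γ₂) C ≤ n := by
          have h1 := mu_split Γ₁ Γ₂ (.and G₁ G₂) C
          have h2 := mu_split2 Γ₁ Γ₂ G₁ G₂ C
          have hw : wt (Form.and G₁ G₂) = wt G₁ + wt G₂ + 2 := rfl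
          have hk := key2 (a := wt G₁) (b := wt G₂) (r := wt (Form.and G₁ G₂))
            (by have := wt_pos G₂; omega) (by have := wt_pos G₁; omega)
          omega
        refine transfer (A' := SF (Γ₁ ++ G₁ :: G₂ :: Γ₂) C) ?_ ?_
          (IH _ C hmu' (by
            intro G' hG'
            rcases List.mem_cons.mp hG' with rfl | hG'
            · exact hbfC
            rcases mem_split.mp hG' with h | rfl | h
            · exact hbf1 _ h
            · exact hbf12.1
            rcases List.mem_cons.mp h with rfl | h
            · exact hbf12.2
            · exact hbf2 _ h))
        · refine ipcb_SF_mono ?_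
          intro Δ hΔ G' hG'
          rcases mem_split.mp hG' with h | rfl | h
          · exact hΔ _ (mem_insL h)
          · exact ND.andI (hΔ _ mem_insX) (hΔ _ (mem_insR (.head _)))
          · exact hΔ _ (mem_insR (.tail _ h))
        · refine ipcb_SF_mono ?_
          intro Δ hΔ G' hG'
          rcases mem_split.mp hG' with h | rfl | h
          · exact hΔ _ (mem_insL h)
          · exact (hΔ _ mem_insX).andL
          rcases List.mem_cons.mp h with rfl | h
          · exact (hΔ _ mem_insX).andR
          · exact hΔ _ (mem_insR h)
      | .or G₁ G₂, hbfG, _ =>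
        have hbf12 := boxFree_or hbfG
        have hbfj : ∀ {Gj : Form}, boxFree Gj = true → ∀ G' ∈ C :: (Γ₁ ++ Gj :: Γ₂),
            boxFree G' = true := by
          intro Gj hGj G' hG'
          rcases List.mem_cons.mp hG' with rfl | hG'
          · exact hbfC
          rcases mem_split.mp hG' with h | rfl | h
          · exact hbf1 _ h
          · exact hGj
          · exact hbf2 _ h
        have hmuj : ∀ Gj : Form, wt Gj < wt (Form.or G₁ G₂) → mu (Γ₁ ++ Gj :: Γ₂) C ≤ n := by
          intro Gj hw
          have h1 := mu_split Γ₁ Γ₂ (.or G₁ G₂) C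
          have h2 := mu_split Γ₁ Γ₂ Gj C
          have := pow4_lt hw
          omega
        have hw1 : wt G₁ < wt (Form.or G₁ G₂) := by
          have := wt_pos G₂; simp [wt]
        have hw2 : wt G₂ < wt (Form.or G₁ G₂) := by
          have := wt_pos G₁; simp [wt]
        refine transfer2 (A₁ := SF (Γ₁ ++ G₁ :: Γ₂) C) (A₂ := SF (Γ₁ ++ G₂ :: Γ₂) C)
          ?_ ?_ ?_ (IH _ C (hmuj G₁ hw1) (hbfj hbf12.1)) (IH _ C (hmuj G₂ hw2) (hbfj hbf12.2))
        · refine ipcb_SF_mono ?_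
          intro Δ hΔ G' hG'
          rcases mem_split.mp hG' with h | rfl | h
          · exact hΔ _ (mem_insL h)
          · exact (hΔ _ mem_insX).orIL
          · exact hΔ _ (mem_insR h)
        · refine ipcb_SF_mono ?_
          intro Δ hΔ G' hG'
          rcases mem_split.mp hG' with h | rfl | h
          · exact hΔ _ (mem_insL h)
          · exact (hΔ _ mem_insX).orIR
          · exact hΔ _ (mem_insR h)
        · refine (ND.ded (ND.ded (ND.ded ?_))).toIpcb
          -- ctx [listConj Γ, SF Γ'₂ C, SF Γ'₁ C] ⊢ C
          have hor := nd_listConj_elim (ND.h0 (Γ := [SF (Γ₁ ++ G₂ :: Γ₂) C,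
            SF (Γ₁ ++ G₁ :: Γ₂) C])) (mem_insX (X := Form.or G₁ G₂) (Γ₁ := Γ₁) (Γ₂ := Γ₂))
          refine hor.orE ?_ ?_
          · -- ctx [G₁, listConj Γ, SF Γ'₂, SF Γ'₁]
            refine ND.h3.mp (nd_listConj_intro ?_)
            intro G' hG'
            rcases mem_split.mp hG' with h | rfl | h
            · exact nd_listConj_elim ND.h1 (mem_insL h)
            · exact ND.h0
            · exact nd_listConj_elim ND.h1 (mem_insR h)
          · refine ND.h2.mp (nd_listConj_intro ?_)
            intro G' hG'
            rcases mem_split.mp hG' with h | rfl | h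
            · exact nd_listConj_elim ND.h1 (mem_insL h)
            · exact ND.h0
            · exact nd_listConj_elim ND.h1 (mem_insR h)
      | .box _, hbfG, _ => simp [boxFree] at hbfG
      | .imp E F, hbfG, hnr =>
        have hbfE := (boxFree_imp hbfG).1
        have hbfF := (boxFree_imp hbfG).2
        match E, hbfE, hnr with
        | .var v, _, hnr => exact absurd ⟨_, _, rfl, Or.inl ⟨v, rfl⟩⟩ hnr
        | .imp D D', _, hnr => exact absurd ⟨_, _, rfl, Or.inr ⟨D, D', rfl⟩⟩ hnr
        | .box _, hbfE, _ => simp [boxFree] at hbfE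
        | .bot, _, _ =>
          have hmu' : mu (Γ₁ ++ Γ₂) C ≤ n := by
            have h1 := mu_split Γ₁ Γ₂ (.imp .bot F) C
            have h2 := mu_del Γ₁ Γ₂ C
            have : (0:ℕ) < 4 ^ wt (Form.imp .bot F) := Nat.pow_pos (by norm_num)
            omega
          refine transfer (A' := SF (Γ₁ ++ Γ₂) C) ?_ ?_
            (IH _ C hmu' (by
              intro G' hG'
              rcases List.mem_cons.mp hG' with rfl | hG'
              · exact hbfC
              rcases List.mem_append.mp hG' with h | h
              · exact hbf1 _ h
              · exact hbf2 _ h))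
          · refine ipcb_SF_mono ?_
            intro Δ hΔ G' hG'
            rcases mem_split.mp hG' with h | rfl | h
            · exact hΔ _ (List.mem_append_left _ h)
            · exact ND.ded ND.h0.efq
            · exact hΔ _ (List.mem_append_right _ h)
          · refine ipcb_SF_mono ?_
            intro Δ hΔ G' hG'
            rcases List.mem_append.mp hG' with h | h
            · exact hΔ _ (mem_insL h)
            · exact hΔ _ (mem_insR h)
        | .and E₁ E₂, hbfE, _ =>
          have hbf12 := boxFree_and hbfE
          have hmu' : mu (Γ₁ ++ (Form.imp E₁ (.imp E₂ F)) :: Γ₂) C ≤ n := by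
            have h1 := mu_split Γ₁ Γ₂ (.imp (.and E₁ E₂) F) C
            have h2 := mu_split Γ₁ Γ₂ (.imp E₁ (.imp E₂ F)) C
            have hw : wt (Form.imp E₁ (.imp E₂ F)) < wt (Form.imp (.and E₁ E₂) F) := by
              simp [wt]; omega
            have := pow4_lt hw
            omega
          refine transfer (A' := SF (Γ₁ ++ (Form.imp E₁ (.imp E₂ F)) :: Γ₂) C) ?_ ?_
            (IH _ C hmu' (by
              intro G' hG'
              rcases List.mem_cons.mp hG' with rfl | hG'
              · exact hbfC
              rcases mem_split.mp hG' with h | rfl | h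
              · exact hbf1 _ h
              · simp only [boxFree, Bool.and_eq_true]
                exact ⟨hbf12.1, hbf12.2, hbfF⟩
              · exact hbf2 _ h))
          · refine ipcb_SF_mono ?_
            intro Δ hΔ G' hG'
            rcases mem_split.mp hG' with h | rfl | h
            · exact hΔ _ (mem_insL h)
            · -- imp (and E₁ E₂) F from curried
              refine ND.ded ?_
              exact (((hΔ _ mem_insX).wk.mp ND.h0.andL).mp ND.h0.andR)
            · exact hΔ _ (mem_insR h)
          · refine ipcb_SF_mono ?_
            intro Δ hΔ G' hG'
            rcases mem_split.mp hG' with h | rfl | h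
            · exact hΔ _ (mem_insL h)
            · -- curried from imp (and E₁ E₂) F
              refine ND.ded (ND.ded ?_)
              exact ((hΔ _ mem_insX).wk.wk).mp (ND.andI ND.h1 ND.h0)
            · exact hΔ _ (mem_insR h)
        | .or E₁ E₂, hbfE, _ =>
          have hbf12 := boxFree_or hbfE
          have hmu' : mu (Γ₁ ++ (Form.imp E₁ F) :: (Form.imp E₂ F) :: Γ₂) C ≤ n := by
            have h1 := mu_split Γ₁ Γ₂ (.imp (.or E₁ E₂) F) C
            have h2 := mu_split2 Γ₁ Γ₂ (.imp E₁ F) (.imp E₂ F) C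
            have hk := key2 (a := wt (Form.imp E₁ F)) (b := wt (Form.imp E₂ F))
              (r := wt (Form.imp (.or E₁ E₂) F))
              (by have := wt_pos E₂; simp [wt])
              (by have := wt_pos E₁; simp [wt])
            omega
          refine transfer (A' := SF (Γ₁ ++ (Form.imp E₁ F) :: (Form.imp E₂ F) :: Γ₂) C) ?_ ?_
            (IH _ C hmu' (by
              intro G' hG'
              rcases List.mem_cons.mp hG' with rfl | hG'
              · exact hbfC
              rcases mem_split.mp hG' with h | rfl | h
              · exact hbf1 _ h
              · simp only [boxFree, Bool.and_eq_true]; exact ⟨hbf12.1, hbfF⟩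
              rcases List.mem_cons.mp h with rfl | h
              · simp only [boxFree, Bool.and_eq_true]; exact ⟨hbf12.2, hbfF⟩
              · exact hbf2 _ h))
          · refine ipcb_SF_mono ?_
            intro Δ hΔ G' hG'
            rcases mem_split.mp hG' with h | rfl | h
            · exact hΔ _ (mem_insL h)
            · refine ND.ded ?_
              refine ND.h0.orE ?_ ?_
              · exact ((hΔ _ mem_insX).wk.wk).mp ND.h0
              · exact ((hΔ _ (mem_insR (.head _))).wk.wk).mp ND.h0
            · exact hΔ _ (mem_insR (.tail _ h))
          · refine ipcb_SF_mono ?_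
            intro Δ hΔ G' hG'
            rcases mem_split.mp hG' with h | rfl | h
            · exact hΔ _ (mem_insL h)
            · exact ND.ded (((hΔ _ mem_insX).wk).mp ND.h0.orIL)
            rcases List.mem_cons.mp h with rfl | h
            · exact ND.ded (((hΔ _ mem_insX).wk).mp ND.h0.orIR)
            · exact hΔ _ (mem_insR h)
    case inl =>
      -- all members ready : work on the consequent
      match C, hbfC with
      | .and C₁ C₂, hbfC =>
        have hbf12 := boxFree_and hbfC
        have hmuj : ∀ Cj : Form, wt Cj < wt (Form.and C₁ C₂) → mu Γ Cj ≤ n := by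
          intro Cj hw
          have h1 := mu_plain Γ (.and C₁ C₂)
          have h2 := mu_plain Γ Cj
          have := pow4_lt hw
          omega
        have hbfj : ∀ {Cj : Form}, boxFree Cj = true → ∀ G' ∈ Cj :: Γ, boxFree G' = true := by
          intro Cj hCj G' hG'
          rcases List.mem_cons.mp hG' with rfl | hG'
          · exact hCj
          · exact hbf G' (.tail _ hG')
        refine transfer2 (A₁ := SF Γ C₁) (A₂ := SF Γ C₂) ?_ ?_ ?_
          (IH _ C₁ (hmuj C₁ (by have := wt_pos C₂; simp [wt]; omega)) (hbfj hbf12.1))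
          (IH _ C₂ (hmuj C₂ (by have := wt_pos C₁; simp [wt]; omega)) (hbfj hbf12.2))
        · exact (ND.ded (ND.ded ((ND.h1.mp ND.h0).andL))).toIpcb
        · exact (ND.ded (ND.ded ((ND.h1.mp ND.h0).andR))).toIpcb
        · refine (ND.ded (ND.ded (ND.ded ?_))).toIpcb
          -- [listConj Γ, SF Γ C₂, SF Γ C₁]
          exact ND.andI (ND.h2.mp ND.h0) (ND.h1.mp ND.h0)
      | .imp C₁ C₂, hbfC =>
        have hbf12 := boxFree_imp hbfC
        have hmu' : mu (C₁ :: Γ) C₂ ≤ n := by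
          have h1 := mu_plain Γ (.imp C₁ C₂)
          have h2 := mu_cons C₁ Γ C₂
          have hk := key2 (a := wt C₂) (b := wt C₁) (r := wt (Form.imp C₁ C₂))
            (by have := wt_pos C₁; simp [wt])
            (by have := wt_pos C₂; simp [wt])
          omega
        refine transfer (A' := SF (C₁ :: Γ) C₂) ?_ ?_
          (IH _ C₂ hmu' (by
            intro G' hG'
            rcases List.mem_cons.mp hG' with rfl | hG'
            · exact hbf12.2
            rcases List.mem_cons.mp hG' with rfl | hG'
            · exact hbf12.1
            · exact hbf G' (.tail _ hG')))
        · refine ipcb_imp (ND.ded ?_)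
          -- [listConj (C₁::Γ), SF Γ (imp C₁ C₂)]
          refine (ND.h1.mp (nd_listConj_intro ?_)).mp (nd_listConj_elim ND.h0 (.head _))
          intro G' hG'
          exact nd_listConj_elim ND.h0 (.tail _ hG')
        · refine ipcb_imp (ND.ded (ND.ded ?_))
          -- [C₁, listConj Γ, SF (C₁::Γ) C₂]
          refine ND.h2.mp (nd_listConj_intro ?_)
          intro G' hG'
          rcases List.mem_cons.mp hG' with rfl | hG'
          · exact ND.h0
          · exact nd_listConj_elim ND.h1 hG'
      | .box _, hbfC => simp [boxFree] at hbfC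
      | .var v, hbfC =>
        exact hardCase n IH Γ (.var v) hready hmu hbf (Or.inl ⟨v, rfl⟩)
      | .bot, hbfC =>
        exact hardCase n IH Γ .bot hready hmu hbf (Or.inr (Or.inl rfl))
      | .or C₁ C₂, hbfC =>
        exact hardCase n IH Γ (.or C₁ C₂) hready hmu hbf (Or.inr (Or.inr ⟨C₁, C₂, rfl⟩))

end PLHA
namespace PLHA
open Form

theorem core_corollary (star : Form → Form) (hstar : IsNNILApproxOp star) {F : Form}
    (hbf : boxFree F = true) : Pres F (star F) := by
  obtain ⟨H, r, s, p⟩ := core (mu [] F) [] F le_rfl (by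
    intro G hG
    rcases List.mem_cons.mp hG with rfl | h
    · exact hbf
    · exact absurd h List.not_mem_nil)
  have hHF : IPCbProves (.imp H F) := ipcb_imp ((nd_of_ipcb_imp s ND.h0).mp ND.topI)
  have hHstar : IPCbProves (.imp H (star F)) := (hstar F).2.2 H r hHF
  have h1 : Pres F (SF [] F) := presIpc (ND.ded (ND.ded ND.h1)).toIpcb
  exact .a2 h1 (.a2 p (presIpc hHstar))

theorem plusF_unfold (star : Form → Form) (C : Form) :
    plusF star C = substF (fun n =>
      if C.fvb ≤ n ∧ n < C.fvb + (strip C C.fvb).2.length then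
        .box (plusAux star C.bdep ((strip C C.fvb).2.getD (n - C.fvb) .bot))
      else .var n) (star (strip C C.fvb).1) := rfl

theorem box_plus_equiv (star : Form → Form) (hstar : IsNNILApproxOp star) :
    ∀ (b : ℕ) (C : Form), C.bdep ≤ b →
      HsigmaProves (iffF (.box (plusF star C)) (.box C)) := by
  intro b
  induction b using Nat.strong_induction_on with
  | _ b IH =>
    intro C hb
    have hbody : ∀ {n : ℕ}, C.fvb ≤ n → n < C.fvb + (strip C C.fvb).2.length →
        ((strip C C.fvb).2.getD (n - C.fvb) .bot) ∈ (strip C C.fvb).2 := by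
      intro n h1 h2
      rw [List.getD_eq_getElem _ _ (by omega)]
      exact List.getElem_mem _
    -- plusF in terms of plusF of the bodies
    have hplusF : plusF star C = substF (fun n =>
        if C.fvb ≤ n ∧ n < C.fvb + (strip C C.fvb).2.length then
          .box (plusF star ((strip C C.fvb).2.getD (n - C.fvb) .bot))
        else .var n) (star (strip C C.fvb).1) := by
      rw [plusF_unfold]
      congr 1
      funext n
      split
      · next hcond =>
        have hmem := hbody hcond.1 hcond.2
        have hlt := strip_bdep C C.fvb _ hmem
        rw [plusAux_fuel star ((strip C C.fvb).2.getD (n - C.fvb) .bot).bdep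
          ((strip C C.fvb).2.getD (n - C.fvb) .bot) C.bdep
          (((strip C C.fvb).2.getD (n - C.fvb) .bot).bdep + 1) le_rfl (by omega) (by omega)]
        rfl
      · rfl
    -- the plain reconstruction
    have hplain : substF (fun n =>
        if C.fvb ≤ n ∧ n < C.fvb + (strip C C.fvb).2.length then
          .box ((strip C C.fvb).2.getD (n - C.fvb) .bot)
        else .var n) (strip C C.fvb).1 = C := by
      refine strip_recon C C.fvb _ le_rfl ?_ ?_
      · intro n hn
        rw [if_neg (by omega : ¬(C.fvb ≤ n ∧ n < C.fvb + (strip C C.fvb).2.length))]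
      · intro i hi
        rw [if_pos (show C.fvb ≤ C.fvb + i ∧ C.fvb + i < C.fvb + (strip C C.fvb).2.length by
          omega)]
        rw [show C.fvb + i - C.fvb = i by omega]
    set M : Form := substF (fun n =>
        if C.fvb ≤ n ∧ n < C.fvb + (strip C C.fvb).2.length then
          .box ((strip C C.fvb).2.getD (n - C.fvb) .bot)
        else .var n) (star (strip C C.fvb).1) with hMdef
    -- (α) Hσ ⊢ plusF C ↔ M
    have halpha : HsigmaProves (iffF (plusF star C) M) := by
      rw [hplusF, hMdef]
      refine hs_subst_iff ?_ (star (strip C C.fvb).1)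
      intro n
      by_cases hcond : C.fvb ≤ n ∧ n < C.fvb + (strip C C.fvb).2.length
      · rw [if_pos hcond, if_pos hcond]
        have hmem := hbody hcond.1 hcond.2
        have hlt := strip_bdep C C.fvb _ hmem
        exact IH (Form.bdep ((strip C C.fvb).2.getD (n - C.fvb) .bot)) (by omega) _ le_rfl
      · rw [if_neg hcond, if_neg hcond]
        exact hs_iff_refl
    -- (β) IPCb ⊢ M → C
    have hbeta : IPCbProves (.imp M C) := by
      have h1 := ipcb_subst (fun n =>
        if C.fvb ≤ n ∧ n < C.fvb + (strip C C.fvb).2.length then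
          .box ((strip C C.fvb).2.getD (n - C.fvb) .bot)
        else .var n) (hstar (strip C C.fvb).1).2.1
      rw [show substF _ (Form.imp (star (strip C C.fvb).1) (strip C C.fvb).1)
        = Form.imp M (substF (fun n =>
          if C.fvb ≤ n ∧ n < C.fvb + (strip C C.fvb).2.length then
            .box ((strip C C.fvb).2.getD (n - C.fvb) .bot)
          else .var n) (strip C C.fvb).1) from rfl, hplain] at h1
      exact h1
    -- (γ) Pres C M
    have hgamma : Pres C M := by
      have hf : atomBoxed (fun n =>
          if C.fvb ≤ n ∧ n < C.fvb + (strip C C.fvb).2.length then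
            Form.box ((strip C C.fvb).2.getD (n - C.fvb) .bot)
          else .var n) := by
        intro n
        dsimp only
        by_cases hcond : C.fvb ≤ n ∧ n < C.fvb + (strip C C.fvb).2.length
        · rw [if_pos hcond]
          exact Or.inr ⟨_, rfl⟩
        · rw [if_neg hcond]
          exact Or.inl (Or.inl ⟨n, rfl⟩)
      have hp := pres_subst hf (core_corollary star hstar (strip_boxFree C C.fvb))
      rw [hplain] at hp
      exact hp
    have hCM : HsigmaProves (.imp (.box C) (.box M)) :=
      .ax (Or.inr (Or.inr (Or.inr ⟨C, M, hgamma, rfl⟩)))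
    refine hs_iffI ?_ ?_
    · exact hs_comp (hs_boxMono (hs_iffL halpha)) (hs_boxMono (hs_of_ipcb hbeta))
    · exact hs_comp hCM (hs_boxMono (hs_iffR halpha))

end PLHA
namespace PLHA

/-- for every modal proposition A, H_σ ⊢ A⁻ ↔ A. -/
theorem Hsigma_minus_equiv (star : Form → Form) (hstar : IsNNILApproxOp star) (A : Form) :
    HsigmaProves (Form.iffF (minusF star A) A) := by
  have hminus : minusF star A = substF (fun n =>
      if A.fvb ≤ n ∧ n < A.fvb + (strip A A.fvb).2.length then
        .box (plusF star ((strip A A.fvb).2.getD (n - A.fvb) .bot))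
      else .var n) (strip A A.fvb).1 := rfl
  have hplain : substF (fun n =>
      if A.fvb ≤ n ∧ n < A.fvb + (strip A A.fvb).2.length then
        .box ((strip A A.fvb).2.getD (n - A.fvb) .bot)
      else .var n) (strip A A.fvb).1 = A := by
    refine strip_recon A A.fvb _ le_rfl ?_ ?_
    · intro n hn
      rw [if_neg (by omega : ¬(A.fvb ≤ n ∧ n < A.fvb + (strip A A.fvb).2.length))]
    · intro i hi
      rw [if_pos (show A.fvb ≤ A.fvb + i ∧ A.fvb + i < A.fvb + (strip A A.fvb).2.length by
        omega)]
      rw [show A.fvb + i - A.fvb = i by omega]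
  have hcong : HsigmaProves (Form.iffF (substF (fun n =>
      if A.fvb ≤ n ∧ n < A.fvb + (strip A A.fvb).2.length then
        .box (plusF star ((strip A A.fvb).2.getD (n - A.fvb) .bot))
      else .var n) (strip A A.fvb).1) (substF (fun n =>
      if A.fvb ≤ n ∧ n < A.fvb + (strip A A.fvb).2.length then
        .box ((strip A A.fvb).2.getD (n - A.fvb) .bot)
      else .var n) (strip A A.fvb).1)) := by
    refine hs_subst_iff ?_ ((strip A A.fvb).1)
    intro n
    by_cases hcond : A.fvb ≤ n ∧ n < A.fvb + (strip A A.fvb).2.length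
    · rw [if_pos hcond, if_pos hcond]
      exact box_plus_equiv star hstar
        (Form.bdep ((strip A A.fvb).2.getD (n - A.fvb) .bot)) _ le_rfl
    · rw [if_neg hcond, if_neg hcond]
      exact hs_iff_refl
  rw [hplain] at hcong
  rw [hminus]
  exact hcong

end PLHA
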